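/- arXiv:1707.03246 — 3 statements merged into one kernel-verified Lean document; each statement's English description precedes it below -/
import Mathlib

section
/- Let S be the simplex in R^n with vertices e_1, ..., e_n and -(e_1+...+e_n). Then its polar body S° is the simplex with vertices v_0 = e_1+...+e_n and v_j = v_0 - (n+1)e_j for 1 ≤ j ≤ n, and vol(S°) = (n+1)^n / n!. -/
open MeasureTheory Pointwise

/-- The polar body `S° = {x : ⟨x, y⟩ ≤ 1 for all y ∈ S}`. -/
def polarBody {n : ℕ} (S : Set (EuclideanSpace ℝ (Fin n))) :
    Set (EuclideanSpace ℝ (Fin n)) :=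
  {x | ∀ y ∈ S, (inner ℝ x y : ℝ) ≤ 1}

lemma sumApply' {n : ℕ} (f : Fin n → EuclideanSpace ℝ (Fin n)) (k : Fin n) :
    (∑ j : Fin n, f j) k = ∑ j : Fin n, f j k := by
  rw [WithLp.ofLp_sum]; exact Finset.sum_apply k Finset.univ _

lemma v0Apply {n : ℕ} (k : Fin n) :
    (∑ j : Fin n, EuclideanSpace.single j (1:ℝ)) k = 1 := by
  rw [sumApply']; simp [EuclideanSpace.single_apply]

lemma zApply {n : ℕ} (j k : Fin n) :
    ((∑ i : Fin n, EuclideanSpace.single i (1:ℝ))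
      - ((n:ℝ)+1) • EuclideanSpace.single j (1:ℝ)) k
    = 1 - ((n:ℝ)+1) * (if k = j then 1 else 0) := by
  rw [PiLp.sub_apply, PiLp.smul_apply, v0Apply, smul_eq_mul, EuclideanSpace.single_apply]

lemma polarHull {n m : ℕ} (f : Fin m → EuclideanSpace ℝ (Fin n)) :
    polarBody (convexHull ℝ (Set.range f)) = {x | ∀ i, (inner ℝ x (f i) : ℝ) ≤ 1} := by
  ext x
  constructor
  · intro hx i
    exact hx (f i) (subset_convexHull ℝ _ ⟨i, rfl⟩)
  · intro hx y hy
    have hlin : IsLinearMap ℝ (fun y : EuclideanSpace ℝ (Fin n) => (inner ℝ x y : ℝ)) :=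
      ⟨fun a b => inner_add_right x a b, fun c a => real_inner_smul_right x a c⟩
    have hconv : Convex ℝ {y : EuclideanSpace ℝ (Fin n) | (inner ℝ x y : ℝ) ≤ 1} :=
      convex_halfSpace_le hlin 1
    exact convexHull_min (by rintro _ ⟨i, rfl⟩; exact hx i) hconv hy

lemma polarDescr {n : ℕ} :
    polarBody (convexHull ℝ (Set.range
        (Fin.snoc (fun i : Fin n => EuclideanSpace.single i (1 : ℝ))
          (-(∑ j : Fin n, EuclideanSpace.single j (1 : ℝ))) :
          Fin (n + 1) → EuclideanSpace ℝ (Fin n))))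
      = {x : EuclideanSpace ℝ (Fin n) | (∀ i, x i ≤ 1) ∧ -∑ i, x i ≤ 1} := by
  rw [polarHull]
  have h1 : ∀ (x : EuclideanSpace ℝ (Fin n)) (i : Fin n),
      (inner ℝ x (EuclideanSpace.single i (1:ℝ)) : ℝ) = x i := by
    intro x i; simp [EuclideanSpace.inner_single_right]
  have h2 : ∀ x : EuclideanSpace ℝ (Fin n),
      (inner ℝ x (-(∑ j : Fin n, EuclideanSpace.single j (1:ℝ))) : ℝ) = -∑ j, x j := by
    intro x; rw [inner_neg_right, inner_sum]; simp [EuclideanSpace.inner_single_right]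
  ext x
  simp only [Set.mem_setOf_eq]
  constructor
  · intro h
    refine ⟨fun i => ?_, ?_⟩
    · have := h (Fin.castSucc i); rwa [Fin.snoc_castSucc, h1] at this
    · have := h (Fin.last n); rwa [Fin.snoc_last, h2] at this
  · rintro ⟨ha, hb⟩ i
    induction i using Fin.lastCases with
    | last => rwa [Fin.snoc_last, h2]
    | cast j => rw [Fin.snoc_castSucc, h1]; exact ha j

lemma hullDescr (n : ℕ) :
    {x : EuclideanSpace ℝ (Fin n) | (∀ i, x i ≤ 1) ∧ -∑ i, x i ≤ 1}
      = convexHull ℝ (Set.range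
        (Fin.cons (∑ j : Fin n, EuclideanSpace.single j (1 : ℝ))
          (fun j : Fin n =>
            (∑ i : Fin n, EuclideanSpace.single i (1 : ℝ))
              - ((n : ℝ) + 1) • EuclideanSpace.single j (1 : ℝ)) :
          Fin (n + 1) → EuclideanSpace ℝ (Fin n))) := by
  have hnpos : (0:ℝ) < (n:ℝ) + 1 := by positivity
  apply Set.Subset.antisymm
  · rintro x ⟨h1, h2⟩
    have hsx : -1 ≤ ∑ i, x i := by linarith
    refine mem_convexHull_of_exists_fintype
      (Fin.cons ((1 + ∑ i, x i)/((n:ℝ)+1)) (fun j => (1 - x j)/((n:ℝ)+1))) _ ?_ ?_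
      (fun i => ⟨i, rfl⟩) ?_
    · intro i
      induction i using Fin.cases with
      | zero => simp only [Fin.cons_zero]; exact div_nonneg (by linarith) (by positivity)
      | succ j => simp only [Fin.cons_succ]; exact div_nonneg (by linarith [h1 j]) (by positivity)
    · rw [Fin.sum_univ_succ]
      simp only [Fin.cons_zero, Fin.cons_succ]
      rw [← Finset.sum_div, Finset.sum_sub_distrib]
      simp only [Finset.sum_const, Finset.card_univ, Fintype.card_fin, nsmul_eq_mul, mul_one]
      field_simp
      ring
    · rw [Fin.sum_univ_succ]
      simp only [Fin.cons_zero, Fin.cons_succ]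
      ext k
      rw [PiLp.add_apply, PiLp.smul_apply,
        sumApply' (fun j => ((1 - x j)/((n:ℝ)+1)) • _)]
      simp only [PiLp.smul_apply, smul_eq_mul, zApply, v0Apply]
      simp only [mul_ite, mul_one, mul_zero, mul_sub]
      rw [Finset.sum_sub_distrib, Finset.sum_ite_eq]
      simp only [Finset.mem_univ, if_true]
      rw [← Finset.sum_div, Finset.sum_sub_distrib]
      simp only [Finset.sum_const, Finset.card_univ, Fintype.card_fin, nsmul_eq_mul, mul_one]
      field_simp
      ring
  · apply convexHull_min
    · rintro _ ⟨i, rfl⟩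
      induction i using Fin.cases with
      | zero =>
        simp only [Fin.cons_zero]
        refine ⟨fun i => le_of_eq (v0Apply i), ?_⟩
        have : ∑ i : Fin n, (∑ j : Fin n, EuclideanSpace.single j (1:ℝ)) i = (n:ℝ) := by
          simp [v0Apply]
        rw [this]; linarith [Nat.cast_nonneg (α := ℝ) n]
      | succ j =>
        simp only [Fin.cons_succ]
        constructor
        · intro i
          rw [zApply]
          by_cases h : i = j <;> simp [h] <;> linarith
        · have : ∑ i : Fin n, ((∑ j' : Fin n, EuclideanSpace.single j' (1:ℝ))
              - ((n:ℝ)+1) • EuclideanSpace.single j (1:ℝ)) i = (n:ℝ) - ((n:ℝ)+1) := by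
            simp only [zApply]
            rw [Finset.sum_sub_distrib]
            simp only [mul_ite, mul_one, mul_zero]
            rw [Finset.sum_ite_eq']
            simp
          rw [this]; linarith
    · rintro x hx y hy a b ha hb hab
      have key : ∀ k, (a • x + b • y) k = a * x k + b * y k := fun k => rfl
      constructor
      · intro i
        rw [key]
        calc a * x i + b * y i ≤ a * 1 + b * 1 := by
              gcongr; exacts [hx.1 i, hy.1 i]
          _ = 1 := by linarith
      · have : ∑ i, (a • x + b • y) i = a * ∑ i, x i + b * ∑ i, y i := by
          simp only [key, Finset.sum_add_distrib, Finset.mul_sum]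
        rw [this]
        have hx2 := hx.2; have hy2 := hy.2
        nlinarith

lemma measCorner (n : ℕ) (r : ℝ) :
    MeasurableSet {y : Fin n → ℝ | (∀ i, 0 ≤ y i) ∧ ∑ i, y i ≤ r} := by
  refine MeasurableSet.inter ?_ ?_
  · show MeasurableSet {y : Fin n → ℝ | ∀ i, 0 ≤ y i}
    have : {y : Fin n → ℝ | ∀ i, 0 ≤ y i} = ⋂ i, {y | 0 ≤ y i} := by
      ext y; simp
    rw [this]
    exact MeasurableSet.iInter fun i =>
      measurableSet_le measurable_const (measurable_pi_apply i)
  · exact measurableSet_le (Finset.measurable_sum _ fun i _ => measurable_pi_apply i)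
      measurable_const

lemma volCorner : ∀ (n : ℕ) (r : ℝ), 0 ≤ r →
    volume {y : Fin n → ℝ | (∀ i, 0 ≤ y i) ∧ ∑ i, y i ≤ r}
      = ENNReal.ofReal (r ^ n / n.factorial) := by
  intro n
  induction n with
  | zero =>
    intro r hr
    have h : {y : Fin 0 → ℝ | (∀ i, 0 ≤ y i) ∧ ∑ i, y i ≤ r} = Set.univ := by
      ext y
      simp only [Set.mem_setOf_eq, Set.mem_univ, iff_true]
      exact ⟨fun i => i.elim0, by simpa using hr⟩
    rw [h, MeasureTheory.volume_pi, Measure.pi_univ]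
    simp
  | succ n ih =>
    intro r hr
    set T : Set (ℝ × (Fin n → ℝ)) :=
      {p | 0 ≤ p.1 ∧ (∀ i, 0 ≤ p.2 i) ∧ p.1 + ∑ i, p.2 i ≤ r} with hT
    have hTm : MeasurableSet T := by
      refine MeasurableSet.inter (measurableSet_le measurable_const measurable_fst) ?_
      refine MeasurableSet.inter ?_ ?_
      · show MeasurableSet {p : ℝ × (Fin n → ℝ) | ∀ i, 0 ≤ p.2 i}
        have : {p : ℝ × (Fin n → ℝ) | ∀ i, 0 ≤ p.2 i} = ⋂ i, {p | 0 ≤ p.2 i} := by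
          ext p; simp
        rw [this]
        exact MeasurableSet.iInter fun i =>
          measurableSet_le measurable_const (measurable_snd.eval)
      · exact measurableSet_le (measurable_fst.add
          ((Finset.measurable_sum _ fun i _ => measurable_pi_apply i).comp measurable_snd))
          measurable_const
    have hpre : {y : Fin (n+1) → ℝ | (∀ i, 0 ≤ y i) ∧ ∑ i, y i ≤ r}
        = (MeasurableEquiv.piFinSuccAbove (fun _ => ℝ) 0) ⁻¹' T := by
      ext y
      simp only [Set.mem_preimage, hT, Set.mem_setOf_eq,
        MeasurableEquiv.piFinSuccAbove_apply, Fin.zero_succAbove, Fin.forall_fin_succ,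
        Fin.sum_univ_succ]
      tauto
    have hvol : volume {y : Fin (n+1) → ℝ | (∀ i, 0 ≤ y i) ∧ ∑ i, y i ≤ r}
        = (volume.prod volume) T := by
      rw [hpre]
      exact (measurePreserving_piFinSuccAbove
        (fun _ : Fin (n+1) => (volume : Measure ℝ)) 0).measure_preimage
        hTm.nullMeasurableSet
    rw [hvol, Measure.prod_apply hTm]
    have hslice : ∀ t : ℝ, volume (Prod.mk t ⁻¹' T)
        = Set.indicator (Set.Icc 0 r)
            (fun t => ENNReal.ofReal ((r - t) ^ n / n.factorial)) t := by
      intro t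
      by_cases ht : t ∈ Set.Icc (0:ℝ) r
      · rw [Set.indicator_of_mem ht]
        have hs : Prod.mk t ⁻¹' T = {y : Fin n → ℝ | (∀ i, 0 ≤ y i) ∧ ∑ i, y i ≤ r - t} := by
          ext y
          simp only [Set.mem_preimage, hT, Set.mem_setOf_eq]
          constructor
          · rintro ⟨-, h2, h3⟩; exact ⟨h2, by linarith⟩
          · rintro ⟨h2, h3⟩; exact ⟨ht.1, h2, by linarith⟩
        rw [hs, ih (r - t) (by linarith [ht.2])]
      · rw [Set.indicator_of_notMem ht]
        have hs : Prod.mk t ⁻¹' T = ∅ := by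
          ext y
          simp only [Set.mem_preimage, hT, Set.mem_setOf_eq, Set.mem_empty_iff_false, iff_false]
          rintro ⟨h1, h2, h3⟩
          have : (0:ℝ) ≤ ∑ i, y i := Finset.sum_nonneg fun i _ => h2 i
          exact ht ⟨h1, by linarith⟩
        simp [hs]
    simp_rw [hslice]
    rw [lintegral_indicator measurableSet_Icc]
    have hcont : Continuous fun t : ℝ => (r - t) ^ n / (n.factorial : ℝ) :=
      ((continuous_const.sub continuous_id).pow n).div_const _
    have hInt : IntegrableOn (fun t : ℝ => (r - t) ^ n / (n.factorial : ℝ)) (Set.Icc 0 r) :=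
      hcont.integrableOn_Icc
    have hnn : 0 ≤ᵐ[volume.restrict (Set.Icc (0:ℝ) r)]
        fun t : ℝ => (r - t) ^ n / (n.factorial : ℝ) := by
      filter_upwards [ae_restrict_mem measurableSet_Icc] with t ht
      have : 0 ≤ r - t := by linarith [ht.2]
      positivity
    rw [← ofReal_integral_eq_lintegral_ofReal hInt hnn]
    congr 1
    rw [MeasureTheory.integral_Icc_eq_integral_Ioc, ← intervalIntegral.integral_of_le hr]
    have : ∫ t in (0:ℝ)..r, (r - t) ^ n / (n.factorial : ℝ)
        = (∫ t in (0:ℝ)..r, (r - t) ^ n) / (n.factorial : ℝ) := by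
      rw [intervalIntegral.integral_div]
    rw [this]
    have : (∫ t in (0:ℝ)..r, (r - t) ^ n) = ∫ u in (0:ℝ)..r, u ^ n := by
      have := intervalIntegral.integral_comp_sub_left (a := (0:ℝ)) (b := r)
        (fun u => u ^ n) r
      simpa using this
    rw [this, integral_pow]
    have hf : ((n+1).factorial : ℝ) = ((n:ℝ) + 1) * (n.factorial : ℝ) := by
      rw [Nat.factorial_succ]; push_cast; ring
    rw [hf]
    field_simp
    simp

lemma volCornerE (n : ℕ) :
    volume {y : EuclideanSpace ℝ (Fin n) | (∀ i, 0 ≤ y i) ∧ ∑ i, y i ≤ 1}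
      = ENNReal.ofReal (1 / n.factorial) := by
  have h := (EuclideanSpace.volume_preserving_symm_measurableEquiv_toLp (Fin n)).measure_preimage
    (measCorner n 1).nullMeasurableSet
  have he : (MeasurableEquiv.toLp 2 (Fin n → ℝ)).symm ⁻¹'
      {y : Fin n → ℝ | (∀ i, 0 ≤ y i) ∧ ∑ i, y i ≤ 1}
      = {y : EuclideanSpace ℝ (Fin n) | (∀ i, 0 ≤ y i) ∧ ∑ i, y i ≤ 1} := rfl
  rw [he] at h
  rw [h, volCorner n 1 zero_le_one, one_pow]

lemma volT (n : ℕ) :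
    volume {x : EuclideanSpace ℝ (Fin n) | (∀ i, x i ≤ 1) ∧ -∑ i, x i ≤ 1}
      = ENNReal.ofReal ((((n:ℝ)+1)^n / n.factorial)) := by
  have hnpos : (0:ℝ) < (n:ℝ) + 1 := by positivity
  set c : ℝ := -((n:ℝ)+1) with hc
  have himg : {x : EuclideanSpace ℝ (Fin n) | (∀ i, x i ≤ 1) ∧ -∑ i, x i ≤ 1}
      = ((fun y => (∑ j : Fin n, EuclideanSpace.single j (1:ℝ)) + y) ∘ (fun y => c • y)) ''
        {y : EuclideanSpace ℝ (Fin n) | (∀ i, 0 ≤ y i) ∧ ∑ i, y i ≤ 1} := by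
    ext x
    simp only [Set.mem_setOf_eq, Set.mem_image, Function.comp_apply]
    constructor
    · rintro ⟨h1, h2⟩
      refine ⟨(WithLp.toLp 2 (fun i => (1 - x i)/((n:ℝ)+1)) : EuclideanSpace ℝ (Fin n)), ⟨?_, ?_⟩, ?_⟩
      · intro i; exact div_nonneg (by linarith [h1 i]) (by positivity)
      · rw [show (∑ i : Fin n, (1 - x i)/((n:ℝ)+1)) = ((n:ℝ) - ∑ i, x i)/((n:ℝ)+1) by
          rw [← Finset.sum_div, Finset.sum_sub_distrib]; simp]
        rw [div_le_one hnpos]; linarith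
      · ext k
        rw [PiLp.add_apply, PiLp.smul_apply, v0Apply, smul_eq_mul]
        show 1 + c * ((1 - x k)/((n:ℝ)+1)) = x k
        rw [hc]; field_simp; ring
    · rintro ⟨y, ⟨hy1, hy2⟩, rfl⟩
      constructor
      · intro i
        rw [PiLp.add_apply, PiLp.smul_apply, v0Apply, smul_eq_mul, hc]
        have := hy1 i; nlinarith
      · have : ∑ i, ((∑ j : Fin n, EuclideanSpace.single j (1:ℝ)) + c • y) i
            = (n:ℝ) + c * ∑ i, y i := by
          have : ∀ i, ((∑ j : Fin n, EuclideanSpace.single j (1:ℝ)) + c • y) i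
              = 1 + c * y i := by
            intro i; rw [PiLp.add_apply, PiLp.smul_apply, v0Apply, smul_eq_mul]
          simp only [this, Finset.sum_add_distrib, Finset.sum_const, Finset.card_univ,
            Fintype.card_fin, nsmul_eq_mul, mul_one, ← Finset.mul_sum]
        rw [this, hc]; nlinarith
  rw [himg, Set.image_comp]
  have hA : ∀ A : Set (EuclideanSpace ℝ (Fin n)),
      volume ((fun y => (∑ j : Fin n, EuclideanSpace.single j (1:ℝ)) + y) '' A) = volume A := by
    intro A
    rw [Set.image_add_left]
    exact measure_preimage_add _ _ _
  rw [hA]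
  have : (fun y : EuclideanSpace ℝ (Fin n) => c • y) ''
      {y : EuclideanSpace ℝ (Fin n) | (∀ i, 0 ≤ y i) ∧ ∑ i, y i ≤ 1}
      = c • {y : EuclideanSpace ℝ (Fin n) | (∀ i, 0 ≤ y i) ∧ ∑ i, y i ≤ 1} := rfl
  rw [this, Measure.addHaar_smul, volCornerE, finrank_euclideanSpace_fin]
  rw [← ENNReal.ofReal_mul (by positivity)]
  congr 1
  rw [hc]
  rw [abs_pow, abs_neg, abs_of_pos hnpos]
  field_simp

/-- Let `S` be the simplex with vertices `e₁, ..., eₙ` and `-(e₁ + ⋯ + eₙ)`.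
Its polar is the simplex with vertices `v₀ = e₁ + ⋯ + eₙ` and
`vⱼ = v₀ - (n+1) eⱼ`, and it has volume `(n+1)^n / n!`. -/
theorem polar_special_simplex {n : ℕ} :
    polarBody (convexHull ℝ (Set.range
        (Fin.snoc (fun i : Fin n => EuclideanSpace.single i (1 : ℝ))
          (-(∑ j : Fin n, EuclideanSpace.single j (1 : ℝ))) :
          Fin (n + 1) → EuclideanSpace ℝ (Fin n))))
      = convexHull ℝ (Set.range
        (Fin.cons (∑ j : Fin n, EuclideanSpace.single j (1 : ℝ))
          (fun j : Fin n =>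
            (∑ i : Fin n, EuclideanSpace.single i (1 : ℝ))
              - ((n : ℝ) + 1) • EuclideanSpace.single j (1 : ℝ)) :
          Fin (n + 1) → EuclideanSpace ℝ (Fin n)))
    ∧ (volume (polarBody (convexHull ℝ (Set.range
        (Fin.snoc (fun i : Fin n => EuclideanSpace.single i (1 : ℝ))
          (-(∑ j : Fin n, EuclideanSpace.single j (1 : ℝ))) :
          Fin (n + 1) → EuclideanSpace ℝ (Fin n)))))).toReal
      = ((n : ℝ) + 1) ^ n / (n.factorial : ℝ) := by
  constructor
  · rw [polarDescr, hullDescr]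
  · rw [polarDescr, volT, ENNReal.toReal_ofReal (by positivity)]
end

section
/- Let K be a convex body in R^n and suppose the Euclidean unit ball B_2^n is the maximal volume ellipsoid contained in a simplex S ⊇ B_2^n. Then S has minimal volume among all simplices containing B_2^n: if T is any simplex with B_2^n ⊆ T, then vol(S) ≤ vol(T). -/
open MeasureTheory Pointwise

def IsSimplex {n : ℕ} (S : Set (EuclideanSpace ℝ (Fin n))) : Prop :=
  ∃ v : Fin (n + 1) → EuclideanSpace ℝ (Fin n),
    AffineIndependent ℝ v ∧ S = convexHull ℝ (Set.range v)

def IsEllipsoid {n : ℕ} (E : Set (EuclideanSpace ℝ (Fin n))) : Prop :=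
  ∃ A : EuclideanSpace ℝ (Fin n) ≃ᵃ[ℝ] EuclideanSpace ℝ (Fin n),
    E = A '' Metric.closedBall 0 1

lemma card_eq_finrank_add_one (n : ℕ) :
    Fintype.card (Fin (n+1)) = Module.finrank ℝ (EuclideanSpace ℝ (Fin n)) + 1 := by
  simp [finrank_euclideanSpace_fin]

noncomputable def affBasis {n : ℕ} (v : Fin (n + 1) → EuclideanSpace ℝ (Fin n))
    (hv : AffineIndependent ℝ v) : AffineBasis (Fin (n+1)) ℝ (EuclideanSpace ℝ (Fin n)) :=
  ⟨v, hv, hv.affineSpan_eq_top_iff_card_eq_finrank_add_one.mpr (card_eq_finrank_add_one n)⟩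

noncomputable def linOfBases {n : ℕ} (v w : Fin (n + 1) → EuclideanSpace ℝ (Fin n))
    (hv : AffineIndependent ℝ v) (hw : AffineIndependent ℝ w) :
    EuclideanSpace ℝ (Fin n) ≃ₗ[ℝ] EuclideanSpace ℝ (Fin n) :=
  ((affBasis w hw).basisOf 0).equiv ((affBasis v hv).basisOf 0) (Equiv.refl _)

noncomputable def affineEquivOfBases {n : ℕ} (v w : Fin (n + 1) → EuclideanSpace ℝ (Fin n))
    (hv : AffineIndependent ℝ v) (hw : AffineIndependent ℝ w) :
    EuclideanSpace ℝ (Fin n) ≃ᵃ[ℝ] EuclideanSpace ℝ (Fin n) :=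
  ((AffineEquiv.constVAdd ℝ _ (-(w 0))).trans (linOfBases v w hv hw).toAffineEquiv).trans
    (AffineEquiv.constVAdd ℝ _ (v 0))

theorem affineEquivOfBases_apply {n : ℕ} (v w : Fin (n + 1) → EuclideanSpace ℝ (Fin n))
    (hv : AffineIndependent ℝ v) (hw : AffineIndependent ℝ w) (i : Fin (n+1)) :
    affineEquivOfBases v w hv hw (w i) = v i := by
  unfold affineEquivOfBases
  simp only [AffineEquiv.trans_apply, AffineEquiv.constVAdd_apply,
    LinearEquiv.coe_toAffineEquiv]
  by_cases h : i = 0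
  · subst h; simp
  · have h0 : (-(w 0) +ᵥ w i) = (affBasis w hw).basisOf 0 ⟨i, h⟩ := by
      rw [AffineBasis.basisOf_apply]
      show -(w 0) + w i = w i - w 0
      abel
    rw [h0, linOfBases, Module.Basis.equiv_apply, Equiv.refl_apply, AffineBasis.basisOf_apply]
    show v 0 + (v i - v 0) = v i
    abel

theorem affineEquivOfBases_apply_fun {n : ℕ} (v w : Fin (n + 1) → EuclideanSpace ℝ (Fin n))
    (hv : AffineIndependent ℝ v) (hw : AffineIndependent ℝ w) (x : EuclideanSpace ℝ (Fin n)) :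
    affineEquivOfBases v w hv hw x = linOfBases v w hv hw x
      + (v 0 - linOfBases v w hv hw (w 0)) := by
  unfold affineEquivOfBases
  simp only [AffineEquiv.trans_apply, AffineEquiv.constVAdd_apply,
    LinearEquiv.coe_toAffineEquiv]
  show v 0 + (linOfBases v w hv hw (-(w 0) + x)) = _
  rw [map_add, map_neg]
  abel

/-- Volume of an image of a set under an affine equivalence. -/
theorem volume_image_affineEquivOfBases {n : ℕ}
    (v w : Fin (n + 1) → EuclideanSpace ℝ (Fin n))
    (hv : AffineIndependent ℝ v) (hw : AffineIndependent ℝ w)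
    (s : Set (EuclideanSpace ℝ (Fin n))) :
    volume (affineEquivOfBases v w hv hw '' s) =
      ENNReal.ofReal |LinearMap.det ((linOfBases v w hv hw : EuclideanSpace ℝ (Fin n) →ₗ[ℝ]
        EuclideanSpace ℝ (Fin n)))| * volume s := by
  have : affineEquivOfBases v w hv hw '' s =
      (v 0 - linOfBases v w hv hw (w 0)) +ᵥ
        ((linOfBases v w hv hw : EuclideanSpace ℝ (Fin n) →ₗ[ℝ] EuclideanSpace ℝ (Fin n)) '' s) := by
    rw [← Set.image_vadd, Set.image_image]
    apply Set.image_congr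
    intro x _
    rw [affineEquivOfBases_apply_fun]
    show linOfBases v w hv hw x + (v 0 - linOfBases v w hv hw (w 0)) =
      (v 0 - linOfBases v w hv hw (w 0)) + linOfBases v w hv hw x
    abel
  rw [this, measure_vadd, Measure.addHaar_image_linearMap]

/-- If the Euclidean unit ball is the maximal volume ellipsoid contained in a simplex
`S ⊇ B₂ⁿ`, then `S` has minimal volume among all simplices containing `B₂ⁿ`. -/
theorem john_position_simplex_minimal {n : ℕ} (S : Set (EuclideanSpace ℝ (Fin n)))
    (hS : IsSimplex S) (hBS : Metric.closedBall (0 : EuclideanSpace ℝ (Fin n)) 1 ⊆ S)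
    (hmax : ∀ E : Set (EuclideanSpace ℝ (Fin n)), IsEllipsoid E → E ⊆ S →
      volume E ≤ volume (Metric.closedBall (0 : EuclideanSpace ℝ (Fin n)) 1)) :
    ∀ T : Set (EuclideanSpace ℝ (Fin n)), IsSimplex T →
      Metric.closedBall (0 : EuclideanSpace ℝ (Fin n)) 1 ⊆ T →
      volume S ≤ volume T := by
  rintro T ⟨w, hw, rfl⟩ hBT
  obtain ⟨v, hv, rfl⟩ := hS
  set A := affineEquivOfBases v w hv hw with hA
  set d := LinearMap.det ((linOfBases v w hv hw : EuclideanSpace ℝ (Fin n) →ₗ[ℝ]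
    EuclideanSpace ℝ (Fin n))) with hdd
  have himg : A '' (convexHull ℝ (Set.range w)) = convexHull ℝ (Set.range v) := by
    rw [show (A : EuclideanSpace ℝ (Fin n) → EuclideanSpace ℝ (Fin n)) '' _
          = A.toAffineMap '' _ from rfl,
      AffineMap.image_convexHull]
    congr 1
    rw [← Set.range_comp]
    exact congrArg Set.range (funext fun i => affineEquivOfBases_apply v w hv hw i)
  have hle := hmax (A '' Metric.closedBall 0 1) ⟨A, rfl⟩
    (by rw [← himg]; exact Set.image_mono hBT)
  rw [hA, volume_image_affineEquivOfBases, ← hdd] at hle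
  have hB0 : volume (Metric.closedBall (0 : EuclideanSpace ℝ (Fin n)) 1) ≠ 0 :=
    (Metric.measure_closedBall_pos volume 0 one_pos).ne'
  have hBtop : volume (Metric.closedBall (0 : EuclideanSpace ℝ (Fin n)) 1) ≠ ⊤ :=
    measure_closedBall_lt_top.ne
  have hd1 : ENNReal.ofReal |d| ≤ 1 := by
    rw [← ENNReal.mul_le_mul_iff_left hB0 hBtop, one_mul]
    exact hle
  calc volume (convexHull ℝ (Set.range v))
      = ENNReal.ofReal |d| * volume (convexHull ℝ (Set.range w)) := by
        rw [← himg, hA, volume_image_affineEquivOfBases, ← hdd]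
    _ ≤ 1 * volume (convexHull ℝ (Set.range w)) := mul_le_mul_left hd1 _
    _ = volume (convexHull ℝ (Set.range w)) := one_mul _
end

section
/- Let μ be the uniform probability measure on a convex body K ⊂ R^n of volume 1, let |·| be a seminorm on R^n, and let p ≥ 1. Then (∫_K |x|^p dx)^{1/p} ≤ C p ∫_K |x| dx for an absolute constant C ≥ 1. -/
open MeasureTheory Set ENNReal NNReal Pointwise

lemma vol_smul_real (l : ℝ) (s : Set ℝ) : volume (l • s) = ENNReal.ofReal |l| * volume s := by
  simpa using Measure.addHaar_smul (volume : Measure ℝ) l s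

lemma vol_compact_add {S T : Set ℝ} (hS : IsCompact S) (hT : IsCompact T)
    (hSne : S.Nonempty) (hTne : T.Nonempty) :
    volume S + volume T ≤ volume (S + T) := by
  set a := sSup S with ha_def
  set b := sInf T with hb_def
  have ha : a ∈ S := hS.sSup_mem hSne
  have hb : b ∈ T := hT.sInf_mem hTne
  set A : Set ℝ := (fun y => a + y) '' T with hA_def
  set B : Set ℝ := (fun x => x + b) '' S with hB_def
  have hAsub : A ⊆ S + T := by
    rintro _ ⟨y, hy, rfl⟩; exact Set.add_mem_add ha hy
  have hBsub : B ⊆ S + T := by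
    rintro _ ⟨x, hx, rfl⟩; exact Set.add_mem_add hx hb
  have hint : B ∩ A ⊆ {a + b} := by
    rintro z ⟨⟨x, hx, hxz⟩, ⟨y, hy, hyz⟩⟩
    simp only at hxz hyz
    have h1 : x ≤ a := le_csSup hS.bddAbove hx
    have h2 : b ≤ y := csInf_le hT.bddBelow hy
    simp only [mem_singleton_iff]
    linarith
  have hAm : MeasurableSet A := by
    rw [hA_def, Set.image_add_left]
    exact hT.measurableSet.preimage (measurable_const_add _)
  have hvA : volume A = volume T := by
    rw [hA_def, Set.image_add_left]
    exact measure_preimage_add volume (-a) T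
  have hvB : volume B = volume S := by
    rw [hB_def, Set.image_add_right]
    exact measure_preimage_add_right volume (-b) S
  have key : volume (B ∪ A) + volume (B ∩ A) = volume B + volume A :=
    measure_union_add_inter B hAm
  have h0 : volume (B ∩ A) = 0 :=
    measure_mono_null hint (by simp)
  calc volume S + volume T = volume B + volume A := by rw [hvA, hvB]
    _ = volume (B ∪ A) + volume (B ∩ A) := key.symm
    _ = volume (B ∪ A) := by rw [h0, add_zero]
    _ ≤ volume (S + T) := measure_mono (union_subset hBsub hAsub)

lemma vol_add_le_general {S T U : Set ℝ} (hS : MeasurableSet S) (hT : MeasurableSet T)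
    (hSne : S.Nonempty) (hTne : T.Nonempty)
    (hU : ∀ x ∈ S, ∀ y ∈ T, x + y ∈ U) :
    volume S + volume T ≤ volume U := by
  obtain ⟨s₀, hs₀⟩ := hSne
  obtain ⟨t₀, ht₀⟩ := hTne
  have key : ∀ K₁ K₂ : Set ℝ, K₁ ⊆ S → IsCompact K₁ → K₂ ⊆ T → IsCompact K₂ →
      volume K₁ + volume K₂ ≤ volume U := by
    intro K₁ K₂ h₁S h₁c h₂T h₂c
    rcases K₁.eq_empty_or_nonempty with rfl | h₁ne
    · simp only [measure_empty, zero_add]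
      have : (fun y => s₀ + y) '' K₂ ⊆ U := by
        rintro _ ⟨y, hy, rfl⟩; exact hU s₀ hs₀ y (h₂T hy)
      calc volume K₂ = volume ((fun y => s₀ + y) '' K₂) := by
            rw [Set.image_add_left]; exact (measure_preimage_add volume (-s₀) K₂).symm
        _ ≤ volume U := measure_mono this
    rcases K₂.eq_empty_or_nonempty with rfl | h₂ne
    · simp only [measure_empty, add_zero]
      have : (fun x => x + t₀) '' K₁ ⊆ U := by
        rintro _ ⟨x, hx, rfl⟩; exact hU x (h₁S hx) t₀ ht₀
      calc volume K₁ = volume ((fun x => x + t₀) '' K₁) := by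
            rw [Set.image_add_right]; exact (measure_preimage_add_right volume (-t₀) K₁).symm
        _ ≤ volume U := measure_mono this
    · refine (vol_compact_add h₁c h₂c h₁ne h₂ne).trans (measure_mono ?_)
      rintro _ ⟨x, hx, y, hy, rfl⟩
      exact hU x (h₁S hx) y (h₂T hy)
  have hS' : volume S ≤ ⨆ (K : {K : Set ℝ // K ⊆ S ∧ IsCompact K}), volume (K : Set ℝ) := by
    rw [hS.measure_eq_iSup_isCompact volume]
    refine iSup_le fun K => iSup_le fun hKS => iSup_le fun hKc => ?_
    exact le_iSup_of_le ⟨K, hKS, hKc⟩ le_rfl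
  have hT' : volume T ≤ ⨆ (K : {K : Set ℝ // K ⊆ T ∧ IsCompact K}), volume (K : Set ℝ) := by
    rw [hT.measure_eq_iSup_isCompact volume]
    refine iSup_le fun K => iSup_le fun hKT => iSup_le fun hKc => ?_
    exact le_iSup_of_le ⟨K, hKT, hKc⟩ le_rfl
  have : Nonempty {K : Set ℝ // K ⊆ S ∧ IsCompact K} := ⟨⟨∅, empty_subset _, isCompact_empty⟩⟩
  have : Nonempty {K : Set ℝ // K ⊆ T ∧ IsCompact K} := ⟨⟨∅, empty_subset _, isCompact_empty⟩⟩
  refine le_trans (add_le_add hS' hT') (ENNReal.iSup_add_iSup_le ?_)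
  intro K₁ K₂
  exact key K₁ K₂ K₁.2.1 K₁.2.2 K₂.2.1 K₂.2.2
lemma rpow_iSup {ι : Sort*} (A : ι → ℝ≥0∞) {l : ℝ} (hl : 0 < l) :
    (⨆ i, A i) ^ l = ⨆ i, (A i) ^ l := by
  refine le_antisymm ?_ (iSup_le fun i => ENNReal.rpow_le_rpow (le_iSup A i) hl.le)
  have key : ∀ i, A i ≤ (⨆ j, (A j) ^ l) ^ (1/l) := by
    intro i
    calc A i = ((A i) ^ l) ^ (1/l) := by
          rw [← ENNReal.rpow_mul, mul_one_div_cancel hl.ne', ENNReal.rpow_one]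
      _ ≤ _ := ENNReal.rpow_le_rpow (le_iSup (fun j => (A j) ^ l) i) (by positivity)
  calc (⨆ i, A i) ^ l ≤ (((⨆ j, (A j) ^ l) ^ (1/l))) ^ l :=
        ENNReal.rpow_le_rpow (iSup_le key) hl.le
    _ = ⨆ j, (A j) ^ l := by
        rw [← ENNReal.rpow_mul, one_div, inv_mul_cancel₀ hl.ne', ENNReal.rpow_one]

lemma ennreal_geom_mean {l : ℝ} (hl0 : 0 < l) (hl1 : l < 1) (z₁ z₂ : ℝ≥0∞) :
    z₁ ^ l * z₂ ^ (1 - l) ≤ ENNReal.ofReal l * z₁ + ENNReal.ofReal (1 - l) * z₂ := by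
  have hl1' : 0 < 1 - l := by linarith
  rcases eq_or_ne z₁ ∞ with rfl | h₁
  · have : ENNReal.ofReal l ≠ 0 := by simp only [ne_eq, ENNReal.ofReal_eq_zero, not_le]; linarith
    rw [ENNReal.mul_top this, top_add]; exact le_top
  rcases eq_or_ne z₂ ∞ with rfl | h₂
  · have : ENNReal.ofReal (1 - l) ≠ 0 := by
      simp only [ne_eq, ENNReal.ofReal_eq_zero, not_le]; linarith
    rw [ENNReal.mul_top this, add_top]; exact le_top
  lift z₁ to ℝ≥0 using h₁
  lift z₂ to ℝ≥0 using h₂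
  have hw : l.toNNReal + (1 - l).toNNReal = 1 := by
    rw [← Real.toNNReal_add hl0.le hl1'.le]
    norm_num
  have key := NNReal.geom_mean_le_arith_mean2_weighted l.toNNReal (1 - l).toNNReal z₁ z₂ hw
  rw [Real.coe_toNNReal l hl0.le, Real.coe_toNNReal (1 - l) hl1'.le] at key
  have coe1 : ENNReal.ofReal l = (l.toNNReal : ℝ≥0∞) := rfl
  have coe2 : ENNReal.ofReal (1 - l) = ((1 - l).toNNReal : ℝ≥0∞) := rfl
  rw [coe1, coe2, ← ENNReal.coe_rpow_of_nonneg z₁ hl0.le, ← ENNReal.coe_rpow_of_nonneg z₂ hl1'.le,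
    ← ENNReal.coe_mul, ← ENNReal.coe_mul, ← ENNReal.coe_mul, ← ENNReal.coe_add]
  exact_mod_cast key

lemma lintegral_scale_Ioi {c : ℝ} (hc : 0 < c) {φ : ℝ → ℝ≥0∞} (hφ : Measurable φ) :
    ∫⁻ t in Set.Ioi (0:ℝ), φ t = ENNReal.ofReal c * ∫⁻ u in Set.Ioi (0:ℝ), φ (c * u) := by
  have hmap : Measure.map (fun u : ℝ => c * u) volume = ENNReal.ofReal |c⁻¹| • volume :=
    Real.map_volume_mul_left (ne_of_gt hc)
  have hpre : (fun u : ℝ => c * u) ⁻¹' Set.Ioi 0 = Set.Ioi 0 := by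
    ext u
    simp only [Set.mem_preimage, Set.mem_Ioi]
    constructor
    · intro h; nlinarith
    · intro h; positivity
  have h1 : ∫⁻ u in Set.Ioi (0:ℝ), φ (c * u) =
      ENNReal.ofReal |c⁻¹| * ∫⁻ t in Set.Ioi (0:ℝ), φ t := by
    calc ∫⁻ u in Set.Ioi (0:ℝ), φ (c * u)
        = ∫⁻ t, φ t ∂(Measure.map (fun u : ℝ => c * u) (volume.restrict (Set.Ioi 0))) :=
          (lintegral_map hφ (measurable_const_mul c)).symm
      _ = ∫⁻ t, φ t ∂((Measure.map (fun u : ℝ => c * u) volume).restrict (Set.Ioi 0)) := by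
          rw [Measure.restrict_map (measurable_const_mul c) measurableSet_Ioi, hpre]
      _ = ENNReal.ofReal |c⁻¹| * ∫⁻ t in Set.Ioi (0:ℝ), φ t := by
          rw [hmap, Measure.restrict_smul, lintegral_smul_measure, smul_eq_mul]
  rw [h1, ← mul_assoc, ← ENNReal.ofReal_mul hc.le, abs_of_pos (inv_pos.2 hc),
    mul_inv_cancel₀ (ne_of_gt hc), ENNReal.ofReal_one, one_mul]

theorem PL_dim1_bounded {f g h : ℝ → ℝ≥0∞} (hf : Measurable f) (hg : Measurable g)
    (hh : Measurable h) {l : ℝ} (hl0 : 0 < l) (hl1 : l < 1) {M : ℝ≥0∞} (hM : M ≠ ∞)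
    (hfM : ∀ x, f x ≤ M) (hgM : ∀ x, g x ≤ M)
    (hyp : ∀ x y, f x ^ l * g y ^ (1 - l) ≤ h (l * x + (1 - l) * y)) :
    (∫⁻ x, f x) ^ l * (∫⁻ x, g x) ^ (1 - l) ≤ ∫⁻ x, h x := by
  have hl1' : 0 < 1 - l := by linarith
  set A := ∫⁻ x, f x with hA
  set B := ∫⁻ x, g x with hB
  rcases eq_or_ne A 0 with hA0 | hA0
  · rw [hA0, ENNReal.zero_rpow_of_pos hl0, zero_mul]; exact zero_le
  rcases eq_or_ne B 0 with hB0 | hB0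
  · rw [hB0, ENNReal.zero_rpow_of_pos hl1', mul_zero]; exact zero_le
  set F := ⨆ x, f x with hF
  set G := ⨆ x, g x with hG
  have hftop : ∀ x, f x ≠ ∞ := fun x => ne_top_of_le_ne_top hM (hfM x)
  have hgtop : ∀ x, g x ≠ ∞ := fun x => ne_top_of_le_ne_top hM (hgM x)
  have hFtop : F ≠ ∞ := ne_top_of_le_ne_top hM (iSup_le hfM)
  have hGtop : G ≠ ∞ := ne_top_of_le_ne_top hM (iSup_le hgM)
  have hF0 : F ≠ 0 := by
    intro h0
    refine hA0 ?_
    have hz : ∀ x, f x = 0 := fun x => le_antisymm ((le_iSup f x).trans h0.le) zero_le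
    rw [hA]; simp [hz]
  have hG0 : G ≠ 0 := by
    intro h0
    refine hB0 ?_
    have hz : ∀ x, g x = 0 := fun x => le_antisymm ((le_iSup g x).trans h0.le) zero_le
    rw [hB]; simp [hz]
  set C := F ^ l * G ^ (1 - l) with hC
  have hC0 : C ≠ 0 :=
    mul_ne_zero (ENNReal.rpow_pos (pos_iff_ne_zero.2 hF0) hFtop).ne'
      (ENNReal.rpow_pos (pos_iff_ne_zero.2 hG0) hGtop).ne'
  have hCtop : C ≠ ∞ :=
    ENNReal.mul_ne_top (ENNReal.rpow_ne_top_of_nonneg hl0.le hFtop)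
      (ENNReal.rpow_ne_top_of_nonneg hl1'.le hGtop)
  set h' : ℝ → ℝ≥0∞ := fun z => min (h z) C with hh'def
  have hh' : Measurable h' := hh.min measurable_const
  have hh'top : ∀ z, h' z ≠ ∞ := fun z => ne_top_of_le_ne_top hCtop (min_le_right _ _)
  set fr : ℝ → ℝ := fun x => (f x).toReal with hfr_def
  set gr : ℝ → ℝ := fun x => (g x).toReal with hgr_def
  set hr : ℝ → ℝ := fun z => (h' z).toReal with hhr_def
  set Fr := F.toReal with hFr_def
  set Gr := G.toReal with hGr_def
  set Cr := C.toReal with hCr_def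
  have hFr : 0 < Fr := ENNReal.toReal_pos hF0 hFtop
  have hGr : 0 < Gr := ENNReal.toReal_pos hG0 hGtop
  have hCr : 0 < Cr := ENNReal.toReal_pos hC0 hCtop
  have hf_eq : ∀ x, ENNReal.ofReal (fr x) = f x := fun x => ENNReal.ofReal_toReal (hftop x)
  have hg_eq : ∀ x, ENNReal.ofReal (gr x) = g x := fun x => ENNReal.ofReal_toReal (hgtop x)
  have hh_eq : ∀ z, ENNReal.ofReal (hr z) = h' z := fun z => ENNReal.ofReal_toReal (hh'top z)
  have hfr_le : ∀ x, fr x ≤ Fr := fun x => ENNReal.toReal_mono hFtop (le_iSup f x)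
  have hgr_le : ∀ x, gr x ≤ Gr := fun x => ENNReal.toReal_mono hGtop (le_iSup g x)
  have hhr_le : ∀ z, hr z ≤ Cr := fun z => ENNReal.toReal_mono hCtop (min_le_right _ _)
  -- the tail-volume functions
  set φf : ℝ → ℝ≥0∞ := fun t => volume {x | t < fr x} with hφf_def
  set φg : ℝ → ℝ≥0∞ := fun t => volume {x | t < gr x} with hφg_def
  set φh : ℝ → ℝ≥0∞ := fun t => volume {x | t < hr x} with hφh_def
  have hφf_anti : Antitone φf := fun s t hst =>
    measure_mono fun x hx => lt_of_le_of_lt hst hx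
  have hφg_anti : Antitone φg := fun s t hst =>
    measure_mono fun x hx => lt_of_le_of_lt hst hx
  have hφh_anti : Antitone φh := fun s t hst =>
    measure_mono fun x hx => lt_of_le_of_lt hst hx
  have hφf_m : Measurable φf := hφf_anti.measurable
  have hφg_m : Measurable φg := hφg_anti.measurable
  have hφh_m : Measurable φh := hφh_anti.measurable
  have hfrm : Measurable fr := hf.ennreal_toReal
  have hgrm : Measurable gr := hg.ennreal_toReal
  have hhrm : Measurable hr := hh'.ennreal_toReal
  -- layer cake representations
  have LCf : A = ∫⁻ t in Set.Ioi (0:ℝ), φf t := by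
    rw [hA, ← lintegral_eq_lintegral_meas_lt volume
      (Filter.Eventually.of_forall fun x => ENNReal.toReal_nonneg) hfrm.aemeasurable]
    exact lintegral_congr fun x => (hf_eq x).symm
  have LCg : B = ∫⁻ t in Set.Ioi (0:ℝ), φg t := by
    rw [hB, ← lintegral_eq_lintegral_meas_lt volume
      (Filter.Eventually.of_forall fun x => ENNReal.toReal_nonneg) hgrm.aemeasurable]
    exact lintegral_congr fun x => (hg_eq x).symm
  have LCh : ∫⁻ z, h' z = ∫⁻ t in Set.Ioi (0:ℝ), φh t := by
    rw [← lintegral_eq_lintegral_meas_lt volume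
      (Filter.Eventually.of_forall fun x => ENNReal.toReal_nonneg) hhrm.aemeasurable]
    exact lintegral_congr fun x => (hh_eq x).symm
  -- the level-set inequality
  have level : ∀ t ∈ Set.Ioo (0:ℝ) 1,
      ENNReal.ofReal l * φf (Fr * t) + ENNReal.ofReal (1 - l) * φg (Gr * t) ≤ φh (Cr * t) := by
    rintro t ⟨ht0, ht1⟩
    set S := {x | Fr * t < fr x} with hS_def
    set T := {y | Gr * t < gr y} with hT_def
    set U := {z | Cr * t < hr z} with hU_def
    have hSm : MeasurableSet S := measurableSet_lt measurable_const hfrm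
    have hTm : MeasurableSet T := measurableSet_lt measurable_const hgrm
    have hUm : MeasurableSet U := measurableSet_lt measurable_const hhrm
    have hSne : S.Nonempty := by
      by_contra hno
      rw [Set.not_nonempty_iff_eq_empty, Set.eq_empty_iff_forall_notMem] at hno
      have hle : ∀ x, fr x ≤ Fr * t := fun x => not_lt.1 (hno x)
      have : F ≤ ENNReal.ofReal (Fr * t) :=
        iSup_le fun x => by rw [← hf_eq x]; exact ENNReal.ofReal_le_ofReal (hle x)
      have h2 : Fr ≤ Fr * t := by
        have := ENNReal.toReal_mono ENNReal.ofReal_ne_top this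
        rwa [ENNReal.toReal_ofReal (by positivity)] at this
      nlinarith
    have hTne : T.Nonempty := by
      by_contra hno
      rw [Set.not_nonempty_iff_eq_empty, Set.eq_empty_iff_forall_notMem] at hno
      have hle : ∀ x, gr x ≤ Gr * t := fun x => not_lt.1 (hno x)
      have : G ≤ ENNReal.ofReal (Gr * t) :=
        iSup_le fun x => by rw [← hg_eq x]; exact ENNReal.ofReal_le_ofReal (hle x)
      have h2 : Gr ≤ Gr * t := by
        have := ENNReal.toReal_mono ENNReal.ofReal_ne_top this
        rwa [ENNReal.toReal_ofReal (by positivity)] at this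
      nlinarith
    -- the scaled sets
    set Sl : Set ℝ := (fun u : ℝ => l⁻¹ * u) ⁻¹' S with hSl_def
    set Tl : Set ℝ := (fun u : ℝ => (1 - l)⁻¹ * u) ⁻¹' T with hTl_def
    have hSlm : MeasurableSet Sl := hSm.preimage (measurable_const_mul _)
    have hTlm : MeasurableSet Tl := hTm.preimage (measurable_const_mul _)
    have hSlne : Sl.Nonempty := by
      obtain ⟨x₀, hx₀⟩ := hSne
      exact ⟨l * x₀, by simp only [hSl_def, Set.mem_preimage]; rw [← mul_assoc,
        inv_mul_cancel₀ hl0.ne', one_mul]; exact hx₀⟩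
    have hTlne : Tl.Nonempty := by
      obtain ⟨y₀, hy₀⟩ := hTne
      exact ⟨(1 - l) * y₀, by simp only [hTl_def, Set.mem_preimage]; rw [← mul_assoc,
        inv_mul_cancel₀ hl1'.ne', one_mul]; exact hy₀⟩
    have hvolSl : volume Sl = ENNReal.ofReal l * volume S := by
      rw [hSl_def, ← Measure.map_apply (measurable_const_mul _) hSm,
        Real.map_volume_mul_left (inv_ne_zero hl0.ne'), inv_inv, Measure.smul_apply,
        smul_eq_mul, abs_of_pos hl0]
    have hvolTl : volume Tl = ENNReal.ofReal (1 - l) * volume T := by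
      rw [hTl_def, ← Measure.map_apply (measurable_const_mul _) hTm,
        Real.map_volume_mul_left (inv_ne_zero hl1'.ne'), inv_inv, Measure.smul_apply,
        smul_eq_mul, abs_of_pos hl1']
    have hsum : ∀ u ∈ Sl, ∀ v ∈ Tl, u + v ∈ U := by
      intro u hu v hv
      have hx : Fr * t < fr (l⁻¹ * u) := hu
      have hy : Gr * t < gr ((1 - l)⁻¹ * v) := hv
      have e1 : ENNReal.ofReal (Fr * t) < f (l⁻¹ * u) := by
        rw [← hf_eq (l⁻¹ * u)]
        exact (ENNReal.ofReal_lt_ofReal_iff (lt_of_le_of_lt (by positivity) hx)).2 hx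
      have e2 : ENNReal.ofReal (Gr * t) < g ((1 - l)⁻¹ * v) := by
        rw [← hg_eq ((1 - l)⁻¹ * v)]
        exact (ENNReal.ofReal_lt_ofReal_iff (lt_of_le_of_lt (by positivity) hy)).2 hy
      have e3 : (ENNReal.ofReal (Fr * t)) ^ l * (ENNReal.ofReal (Gr * t)) ^ (1 - l) <
          f (l⁻¹ * u) ^ l * g ((1 - l)⁻¹ * v) ^ (1 - l) :=
        ENNReal.mul_lt_mul (ENNReal.rpow_lt_rpow e1 hl0) (ENNReal.rpow_lt_rpow e2 hl1')
      have e4 : (ENNReal.ofReal (Fr * t)) ^ l * (ENNReal.ofReal (Gr * t)) ^ (1 - l) =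
          C * ENNReal.ofReal t := by
        rw [ENNReal.ofReal_mul hFr.le, ENNReal.ofReal_mul hGr.le,
          hFr_def, hGr_def, ENNReal.ofReal_toReal hFtop, ENNReal.ofReal_toReal hGtop,
          ENNReal.mul_rpow_of_ne_top hFtop ENNReal.ofReal_ne_top,
          ENNReal.mul_rpow_of_ne_top hGtop ENNReal.ofReal_ne_top, hC]
        have : (ENNReal.ofReal t) ^ l * (ENNReal.ofReal t) ^ (1 - l) = ENNReal.ofReal t := by
          rw [← ENNReal.rpow_add l (1 - l) (by simp [ENNReal.ofReal_eq_zero]; linarith)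
            ENNReal.ofReal_ne_top]
          norm_num
        calc F ^ l * ENNReal.ofReal t ^ l * (G ^ (1 - l) * ENNReal.ofReal t ^ (1 - l))
            = F ^ l * G ^ (1 - l) * ((ENNReal.ofReal t) ^ l * (ENNReal.ofReal t) ^ (1 - l)) := by
              ring
          _ = F ^ l * G ^ (1 - l) * ENNReal.ofReal t := by rw [this]
      have e5 : C * ENNReal.ofReal t < h (u + v) := by
        have := hyp (l⁻¹ * u) ((1 - l)⁻¹ * v)
        have harg : l * (l⁻¹ * u) + (1 - l) * ((1 - l)⁻¹ * v) = u + v := by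
          field_simp
        rw [harg] at this
        calc C * ENNReal.ofReal t = (ENNReal.ofReal (Fr * t)) ^ l *
              (ENNReal.ofReal (Gr * t)) ^ (1 - l) := e4.symm
          _ < f (l⁻¹ * u) ^ l * g ((1 - l)⁻¹ * v) ^ (1 - l) := e3
          _ ≤ h (u + v) := this
      have e6 : C * ENNReal.ofReal t < C := by
        conv_rhs => rw [← mul_one C]
        exact (ENNReal.mul_lt_mul_iff_right hC0 hCtop).2 (by
          rw [← ENNReal.ofReal_one]
          exact (ENNReal.ofReal_lt_ofReal_iff one_pos).2 ht1)
      have e7 : C * ENNReal.ofReal t < h' (u + v) := lt_min e5 e6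
      show Cr * t < hr (u + v)
      have : ENNReal.ofReal (Cr * t) < h' (u + v) := by
        rwa [ENNReal.ofReal_mul hCr.le, hCr_def, ENNReal.ofReal_toReal hCtop]
      exact (ENNReal.ofReal_lt_iff_lt_toReal (by positivity) (hh'top _)).1 this
    have main := vol_add_le_general hSlm hTlm hSlne hTlne hsum
    rw [hvolSl, hvolTl] at main
    exact main
  -- vanishing beyond 1 (after rescaling)
  have vanish : ∀ (φ : ℝ → ℝ≥0∞) (c : ℝ), Measurable φ → (∀ u : ℝ, 1 ≤ u → φ (c * u) = 0) →
      ∫⁻ u in Set.Ioi (0:ℝ), φ (c * u) = ∫⁻ u in Set.Ioo (0:ℝ) 1, φ (c * u) := by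
    intro φ c hφ hzero
    have hdisj : Disjoint (Set.Ioo (0:ℝ) 1) (Set.Ici (1:ℝ)) :=
      Set.disjoint_left.2 fun a ha hb => absurd hb (not_le.2 ha.2)
    rw [← Set.Ioo_union_Ici_eq_Ioi (zero_lt_one (α := ℝ)),
      lintegral_union measurableSet_Ici hdisj]
    have : ∫⁻ u in Set.Ici (1:ℝ), φ (c * u) = 0 := by
      rw [setLIntegral_congr_fun measurableSet_Ici
        (fun u hu => hzero u hu)]
      simp
    rw [this, add_zero]
  have vf : ∀ u : ℝ, 1 ≤ u → φf (Fr * u) = 0 := by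
    intro u hu
    have : {x | Fr * u < fr x} = ∅ := by
      rw [Set.eq_empty_iff_forall_notMem]
      intro x hx
      have : fr x ≤ Fr := hfr_le x
      have : Fr ≤ Fr * u := le_mul_of_one_le_right hFr.le hu
      exact absurd hx (by simp only [Set.mem_setOf_eq]; push_neg; linarith [hfr_le x])
    rw [hφf_def]; simp only [this, measure_empty]
  have vg : ∀ u : ℝ, 1 ≤ u → φg (Gr * u) = 0 := by
    intro u hu
    have : {x | Gr * u < gr x} = ∅ := by
      rw [Set.eq_empty_iff_forall_notMem]
      intro x hx
      have : Gr ≤ Gr * u := le_mul_of_one_le_right hGr.le hu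
      exact absurd hx (by simp only [Set.mem_setOf_eq]; push_neg; linarith [hgr_le x])
    rw [hφg_def]; simp only [this, measure_empty]
  -- rescaled layer-cake identities
  have subf : ∫⁻ t in Set.Ioi (0:ℝ), φf t =
      ENNReal.ofReal Fr * ∫⁻ u in Set.Ioi (0:ℝ), φf (Fr * u) := lintegral_scale_Ioi hFr hφf_m
  have subg : ∫⁻ t in Set.Ioi (0:ℝ), φg t =
      ENNReal.ofReal Gr * ∫⁻ u in Set.Ioi (0:ℝ), φg (Gr * u) := lintegral_scale_Ioi hGr hφg_m
  have subh : ∫⁻ t in Set.Ioi (0:ℝ), φh t =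
      ENNReal.ofReal Cr * ∫⁻ u in Set.Ioi (0:ℝ), φh (Cr * u) := lintegral_scale_Ioi hCr hφh_m
  -- abbreviations for rescaled integrals
  set If := ∫⁻ u in Set.Ioi (0:ℝ), φf (Fr * u) with hIf
  set Ig := ∫⁻ u in Set.Ioi (0:ℝ), φg (Gr * u) with hIg
  -- main integral inequality
  have mf' : Measurable fun u : ℝ => φf (Fr * u) := hφf_m.comp (measurable_const_mul Fr)
  have mg' : Measurable fun u : ℝ => φg (Gr * u) := hφg_m.comp (measurable_const_mul Gr)
  have mh' : Measurable fun u : ℝ => φh (Cr * u) := hφh_m.comp (measurable_const_mul Cr)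
  have main : ENNReal.ofReal l * If + ENNReal.ofReal (1 - l) * Ig ≤
      ∫⁻ u in Set.Ioi (0:ℝ), φh (Cr * u) := by
    have hIfeq : If = ∫⁻ u in Set.Ioo (0:ℝ) 1, φf (Fr * u) :=
      vanish φf Fr hφf_m vf
    have hIgeq : Ig = ∫⁻ u in Set.Ioo (0:ℝ) 1, φg (Gr * u) :=
      vanish φg Gr hφg_m vg
    have step1 : ENNReal.ofReal l * If + ENNReal.ofReal (1 - l) * Ig =
        ∫⁻ u in Set.Ioo (0:ℝ) 1,
          (ENNReal.ofReal l * φf (Fr * u) + ENNReal.ofReal (1 - l) * φg (Gr * u)) := by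
      rw [hIfeq, hIgeq, lintegral_add_left (mf'.const_mul _),
        lintegral_const_mul _ mf', lintegral_const_mul _ mg']
    rw [step1]
    calc ∫⁻ u in Set.Ioo (0:ℝ) 1,
          (ENNReal.ofReal l * φf (Fr * u) + ENNReal.ofReal (1 - l) * φg (Gr * u))
        ≤ ∫⁻ u in Set.Ioo (0:ℝ) 1, φh (Cr * u) :=
          setLIntegral_mono mh' level
      _ ≤ ∫⁻ u in Set.Ioi (0:ℝ), φh (Cr * u) :=
          lintegral_mono_set Set.Ioo_subset_Ioi_self
  -- put everything together
  have hinth : ∫⁻ z, h' z ≥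
      ENNReal.ofReal Cr * (ENNReal.ofReal l * If + ENNReal.ofReal (1 - l) * Ig) := by
    rw [LCh, subh]
    exact mul_le_mul_right main _
  have hIfval : If = ENNReal.ofReal Fr⁻¹ * A := by
    have : A = ENNReal.ofReal Fr * If := by rw [LCf, subf]
    rw [this, ← mul_assoc, ← ENNReal.ofReal_mul (by positivity),
      inv_mul_cancel₀ hFr.ne', ENNReal.ofReal_one, one_mul]
  have hIgval : Ig = ENNReal.ofReal Gr⁻¹ * B := by
    have : B = ENNReal.ofReal Gr * Ig := by rw [LCg, subg]
    rw [this, ← mul_assoc, ← ENNReal.ofReal_mul (by positivity),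
      inv_mul_cancel₀ hGr.ne', ENNReal.ofReal_one, one_mul]
  -- final AM-GM step
  have hCeq : ENNReal.ofReal Cr = C := by rw [hCr_def, ENNReal.ofReal_toReal hCtop]
  have amgm : A ^ l * B ^ (1 - l) ≤
      ENNReal.ofReal Cr * (ENNReal.ofReal l * If + ENNReal.ofReal (1 - l) * Ig) := by
    rw [hIfval, hIgval, hCeq]
    set a := ENNReal.ofReal Fr⁻¹ * A with ha_def
    set b := ENNReal.ofReal Gr⁻¹ * B with hb_def
    have ha0 : a ≠ 0 := mul_ne_zero (by simp [ENNReal.ofReal_eq_zero]; positivity) hA0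
    have hb0 : b ≠ 0 := mul_ne_zero (by simp [ENNReal.ofReal_eq_zero]; positivity) hB0
    have hAeq : A = ENNReal.ofReal Fr * a := by
      rw [ha_def, ← mul_assoc, ← ENNReal.ofReal_mul hFr.le, mul_inv_cancel₀ hFr.ne',
        ENNReal.ofReal_one, one_mul]
    have hBeq : B = ENNReal.ofReal Gr * b := by
      rw [hb_def, ← mul_assoc, ← ENNReal.ofReal_mul hGr.le, mul_inv_cancel₀ hGr.ne',
        ENNReal.ofReal_one, one_mul]
    have hFrC : (ENNReal.ofReal Fr) ^ l * (ENNReal.ofReal Gr) ^ (1 - l) = C := by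
      rw [hFr_def, hGr_def, ENNReal.ofReal_toReal hFtop, ENNReal.ofReal_toReal hGtop, hC]
    calc A ^ l * B ^ (1 - l)
        = (ENNReal.ofReal Fr * a) ^ l * (ENNReal.ofReal Gr * b) ^ (1 - l) := by
          rw [← hAeq, ← hBeq]
      _ = (ENNReal.ofReal Fr) ^ l * a ^ l * ((ENNReal.ofReal Gr) ^ (1 - l) * b ^ (1 - l)) := by
          rw [ENNReal.mul_rpow_of_ne_zero (by simp [ENNReal.ofReal_eq_zero]; positivity) ha0,
            ENNReal.mul_rpow_of_ne_zero (by simp [ENNReal.ofReal_eq_zero]; positivity) hb0]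
      _ = ((ENNReal.ofReal Fr) ^ l * (ENNReal.ofReal Gr) ^ (1 - l)) * (a ^ l * b ^ (1 - l)) := by
          ring
      _ = C * (a ^ l * b ^ (1 - l)) := by rw [hFrC]
      _ ≤ C * (ENNReal.ofReal l * a + ENNReal.ofReal (1 - l) * b) :=
          mul_le_mul_right (ennreal_geom_mean hl0 hl1 a b) _
  calc A ^ l * B ^ (1 - l)
      ≤ ENNReal.ofReal Cr * (ENNReal.ofReal l * If + ENNReal.ofReal (1 - l) * Ig) := amgm
    _ ≤ ∫⁻ z, h' z := hinth
    _ ≤ ∫⁻ z, h z := lintegral_mono fun z => min_le_left _ _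

theorem PL_dim1 {f g h : ℝ → ℝ≥0∞} (hf : Measurable f) (hg : Measurable g)
    (hh : Measurable h) {l : ℝ} (hl0 : 0 < l) (hl1 : l < 1)
    (hyp : ∀ x y, f x ^ l * g y ^ (1 - l) ≤ h (l * x + (1 - l) * y)) :
    (∫⁻ x, f x) ^ l * (∫⁻ x, g x) ^ (1 - l) ≤ ∫⁻ x, h x := by
  have hl1' : 0 < 1 - l := by linarith
  have key : ∀ n : ℕ, (∫⁻ x, min (f x) n) ^ l * (∫⁻ x, min (g x) n) ^ (1 - l) ≤ ∫⁻ x, h x := by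
    intro n
    refine PL_dim1_bounded (hf.min measurable_const) (hg.min measurable_const) hh hl0 hl1
      (M := (n : ℝ≥0∞)) (ENNReal.natCast_ne_top n)
      (fun x => min_le_right _ _) (fun x => min_le_right _ _) ?_
    intro x y
    exact le_trans (mul_le_mul' (ENNReal.rpow_le_rpow (min_le_left _ _) hl0.le)
      (ENNReal.rpow_le_rpow (min_le_left _ _) hl1'.le)) (hyp x y)
  have pointsup : ∀ (F : ℝ → ℝ≥0∞) (x : ℝ), (⨆ n : ℕ, min (F x) (n : ℝ≥0∞)) = F x := by
    intro F x
    rcases eq_or_ne (F x) ∞ with hx | hx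
    · rw [hx]
      have hmin : ∀ n : ℕ, min (∞ : ℝ≥0∞) (n : ℝ≥0∞) = (n : ℝ≥0∞) := fun n =>
        min_eq_right le_top
      simp only [hmin, ENNReal.iSup_natCast]
    · obtain ⟨n, hn⟩ := ENNReal.exists_nat_gt hx
      refine le_antisymm (iSup_le fun m => min_le_left _ _) ?_
      exact le_iSup_of_le n (le_min le_rfl hn.le)
  have monof : Monotone (fun (n : ℕ) => fun x => min (f x) (n : ℝ≥0∞)) := by
    intro n m hnm
    intro x
    exact min_le_min le_rfl (by exact_mod_cast hnm)
  have monog : Monotone (fun (n : ℕ) => fun x => min (g x) (n : ℝ≥0∞)) := by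
    intro n m hnm
    intro x
    exact min_le_min le_rfl (by exact_mod_cast hnm)
  have truncf : (⨆ n : ℕ, ∫⁻ x, min (f x) (n : ℝ≥0∞)) = ∫⁻ x, f x := by
    rw [← lintegral_iSup (fun n => hf.min measurable_const) monof]
    exact lintegral_congr fun x => pointsup f x
  have truncg : (⨆ n : ℕ, ∫⁻ x, min (g x) (n : ℝ≥0∞)) = ∫⁻ x, g x := by
    rw [← lintegral_iSup (fun n => hg.min measurable_const) monog]
    exact lintegral_congr fun x => pointsup g x
  rw [← truncf, ← truncg, rpow_iSup _ hl0, rpow_iSup _ hl1', ENNReal.iSup_mul]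
  refine iSup_le fun n => ?_
  rw [ENNReal.mul_iSup]
  refine iSup_le fun m => ?_
  have h1 : ∫⁻ x, min (f x) (n : ℝ≥0∞) ≤ ∫⁻ x, min (f x) ((max n m : ℕ) : ℝ≥0∞) :=
    lintegral_mono fun x => min_le_min le_rfl (by exact_mod_cast Nat.le_max_left n m)
  have h2 : ∫⁻ x, min (g x) (m : ℝ≥0∞) ≤ ∫⁻ x, min (g x) ((max n m : ℕ) : ℝ≥0∞) :=
    lintegral_mono fun x => min_le_min le_rfl (by exact_mod_cast Nat.le_max_right n m)
  exact le_trans (mul_le_mul' (ENNReal.rpow_le_rpow h1 hl0.le)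
    (ENNReal.rpow_le_rpow h2 hl1'.le)) (key (max n m))
theorem PL_pi : ∀ (n : ℕ) {f g h : (Fin n → ℝ) → ℝ≥0∞}, Measurable f → Measurable g →
    Measurable h → ∀ {l : ℝ}, 0 < l → l < 1 →
    (∀ x y, f x ^ l * g y ^ (1 - l) ≤ h (l • x + (1 - l) • y)) →
    (∫⁻ x, f x) ^ l * (∫⁻ x, g x) ^ (1 - l) ≤ ∫⁻ x, h x := by
  intro n
  induction n with
  | zero =>
    intro f g h hf hg hh l hl0 hl1 hyp
    have hall : ∀ x y z : Fin 0 → ℝ, f x ^ l * g y ^ (1 - l) ≤ h z := by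
      intro x y z
      have := hyp x y
      rwa [Subsingleton.elim (l • x + (1 - l) • y) z] at this
    have huniv : (volume : Measure (Fin 0 → ℝ)) Set.univ = 1 := by
      rw [volume_pi, Measure.pi_univ]
      simp
    rw [lintegral_unique f, lintegral_unique g, lintegral_unique h, huniv, mul_one, mul_one,
      mul_one]
    exact hall _ _ _
  | succ n IH =>
    intro f g h hf hg hh l hl0 hl1 hyp
    have hl1' : 0 < 1 - l := by linarith
    set e := MeasurableEquiv.piFinSuccAbove (fun _ : Fin (n + 1) => ℝ) 0 with he_def
    have mp : MeasurePreserving e volume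
        ((volume : Measure ℝ).prod (volume : Measure (Fin n → ℝ))) := by
      have h0 := measurePreserving_piFinSuccAbove (fun _ : Fin (n + 1) => (volume : Measure ℝ)) 0
      rw [volume_pi, volume_pi]
      exact h0
    set f' : ℝ × (Fin n → ℝ) → ℝ≥0∞ := fun p => f (e.symm p) with hf'_def
    set g' : ℝ × (Fin n → ℝ) → ℝ≥0∞ := fun p => g (e.symm p) with hg'_def
    set h' : ℝ × (Fin n → ℝ) → ℝ≥0∞ := fun p => h (e.symm p) with hh'_def
    have hf' : Measurable f' := hf.comp e.symm.measurable
    have hg' : Measurable g' := hg.comp e.symm.measurable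
    have hh' : Measurable h' := hh.comp e.symm.measurable
    -- linearity of e.symm
    have esymm_lin : ∀ (c₁ c₂ : ℝ) (z₁ z₂ : Fin n → ℝ),
        l • e.symm (c₁, z₁) + (1 - l) • e.symm (c₂, z₂) =
          e.symm (l * c₁ + (1 - l) * c₂, l • z₁ + (1 - l) • z₂) := by
      intro c₁ c₂ z₁ z₂
      have hsymm : ∀ (c : ℝ) (z : Fin n → ℝ), e.symm (c, z) = Fin.insertNth 0 c z := by
        intro c z
        rfl
      rw [hsymm, hsymm, hsymm]
      funext i
      induction i using Fin.cases with
      | zero =>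
        simp [Fin.insertNth_apply_same]
      | succ j =>
        have : (0 : Fin (n + 1)).succAbove j = j.succ := by
          rw [Fin.succAbove_zero]
        simp only [Pi.add_apply, Pi.smul_apply, smul_eq_mul, ← this,
          Fin.insertNth_apply_succAbove]
    -- transported hypothesis
    have hyp' : ∀ (a b : ℝ × (Fin n → ℝ)),
        f' a ^ l * g' b ^ (1 - l) ≤
          h' (l * a.1 + (1 - l) * b.1, l • a.2 + (1 - l) • b.2) := by
      rintro ⟨a1, a2⟩ ⟨b1, b2⟩
      have := hyp (e.symm (a1, a2)) (e.symm (b1, b2))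
      rwa [esymm_lin] at this
    -- the section integrals
    set F : ℝ → ℝ≥0∞ := fun a => ∫⁻ z, f' (a, z) with hFdef
    set G : ℝ → ℝ≥0∞ := fun a => ∫⁻ z, g' (a, z) with hGdef
    set H : ℝ → ℝ≥0∞ := fun a => ∫⁻ z, h' (a, z) with hHdef
    have hFm : Measurable F := Measurable.lintegral_prod_right (f := fun a z => f' (a, z)) hf'
    have hGm : Measurable G := Measurable.lintegral_prod_right (f := fun a z => g' (a, z)) hg'
    have hHm : Measurable H := Measurable.lintegral_prod_right (f := fun a z => h' (a, z)) hh'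
    have hypFGH : ∀ a b : ℝ, F a ^ l * G b ^ (1 - l) ≤ H (l * a + (1 - l) * b) := by
      intro a b
      exact IH (hf'.comp measurable_prodMk_left) (hg'.comp measurable_prodMk_left)
        (hh'.comp measurable_prodMk_left) hl0 hl1 (fun z w => hyp' (a, z) (b, w))
    have key := PL_dim1 hFm hGm hHm hl0 hl1 hypFGH
    -- identify the integrals
    have hif : ∫⁻ x, f x = ∫⁻ a, F a := by
      have h1 : ∫⁻ x, f x = ∫⁻ x, f' (e x) := by
        refine lintegral_congr fun x => ?_
        rw [hf'_def]
        simp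
      rw [h1, mp.lintegral_comp hf', lintegral_prod _ hf'.aemeasurable]
    have hig : ∫⁻ x, g x = ∫⁻ a, G a := by
      have h1 : ∫⁻ x, g x = ∫⁻ x, g' (e x) := by
        refine lintegral_congr fun x => ?_
        rw [hg'_def]
        simp
      rw [h1, mp.lintegral_comp hg', lintegral_prod _ hg'.aemeasurable]
    have hih : ∫⁻ x, h x = ∫⁻ a, H a := by
      have h1 : ∫⁻ x, h x = ∫⁻ x, h' (e x) := by
        refine lintegral_congr fun x => ?_
        rw [hh'_def]
        simp
      rw [h1, mp.lintegral_comp hh', lintegral_prod _ hh'.aemeasurable]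
    rw [hif, hig, hih]
    exact key

theorem PL_euclidean (n : ℕ) {f g h : EuclideanSpace ℝ (Fin n) → ℝ≥0∞}
    (hf : Measurable f) (hg : Measurable g) (hh : Measurable h)
    {l : ℝ} (hl0 : 0 < l) (hl1 : l < 1)
    (hyp : ∀ x y, f x ^ l * g y ^ (1 - l) ≤ h (l • x + (1 - l) • y)) :
    (∫⁻ x, f x) ^ l * (∫⁻ x, g x) ^ (1 - l) ≤ ∫⁻ x, h x := by
  set ψ := (MeasurableEquiv.toLp 2 (Fin n → ℝ)).symm with hψ
  have mp : MeasurePreserving ψ volume volume :=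
    EuclideanSpace.volume_preserving_symm_measurableEquiv_toLp (Fin n)
  set f' : (Fin n → ℝ) → ℝ≥0∞ := fun p => f (ψ.symm p) with hf'
  set g' : (Fin n → ℝ) → ℝ≥0∞ := fun p => g (ψ.symm p) with hg'
  set h' : (Fin n → ℝ) → ℝ≥0∞ := fun p => h (ψ.symm p) with hh'
  have hf'm : Measurable f' := hf.comp ψ.symm.measurable
  have hg'm : Measurable g' := hg.comp ψ.symm.measurable
  have hh'm : Measurable h' := hh.comp ψ.symm.measurable
  have key := PL_pi n (f := f') (g := g') (h := h') hf'm hg'm hh'm hl0 hl1 (fun x y => by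
      have := hyp (ψ.symm x) (ψ.symm y)
      have harg : l • ψ.symm x + (1 - l) • ψ.symm y = ψ.symm (l • x + (1 - l) • y) := rfl
      rwa [harg] at this)
  have hif : ∫⁻ x, f x = ∫⁻ p, f' p := by
    rw [← mp.lintegral_comp hf'm]
    exact lintegral_congr fun x => by rw [hf']; simp
  have hig : ∫⁻ x, g x = ∫⁻ p, g' p := by
    rw [← mp.lintegral_comp hg'm]
    exact lintegral_congr fun x => by rw [hg']; simp
  have hih : ∫⁻ x, h x = ∫⁻ p, h' p := by
    rw [← mp.lintegral_comp hh'm]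
    exact lintegral_congr fun x => by rw [hh']; simp
  rw [hif, hig, hih]
  exact key
lemma seminorm_sum_le {E : Type*} {ι : Type*} [AddCommGroup E] [Module ℝ E]
    (N : Seminorm ℝ E) (s : Finset ι) (v : ι → E) :
    N (∑ i ∈ s, v i) ≤ ∑ i ∈ s, N (v i) := by
  classical
  induction s using Finset.induction_on with
  | empty => simp
  | insert _ _ hnot ih =>
    rw [Finset.sum_insert hnot, Finset.sum_insert hnot]
    exact le_trans (map_add_le_add N _ _) (add_le_add le_rfl ih)

lemma seminorm_continuous {n : ℕ} (N : Seminorm ℝ (EuclideanSpace ℝ (Fin n))) :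
    Continuous N := by
  classical
  set b := EuclideanSpace.basisFun (Fin n) ℝ with hb
  set c : ℝ := ∑ i, N (b i) with hc
  have hc0 : 0 ≤ c := Finset.sum_nonneg fun i _ => apply_nonneg N _
  have hcoord : ∀ (x : EuclideanSpace ℝ (Fin n)) (i : Fin n), |x i| ≤ ‖x‖ := by
    intro x i
    have h1 : inner ℝ (EuclideanSpace.single i (1:ℝ)) x = (1:ℝ) * x i := by
      simpa using EuclideanSpace.inner_single_left i (1:ℝ) x
    have h2 := abs_real_inner_le_norm (EuclideanSpace.single i (1:ℝ)) x
    rw [h1, one_mul, EuclideanSpace.norm_single] at h2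
    simpa using h2
  have hbound : ∀ x : EuclideanSpace ℝ (Fin n), N x ≤ c * ‖x‖ := by
    intro x
    have hx : ∑ i, x i • b i = x := by
      have h0 := b.sum_repr x
      have h1 : ∀ i, b.repr x i = x i := fun i => EuclideanSpace.basisFun_repr (Fin n) ℝ x i
      calc ∑ i, x i • b i = ∑ i, b.repr x i • b i := by
            refine Finset.sum_congr rfl fun i _ => ?_
            rw [h1]
        _ = x := h0
    calc N x = N (∑ i, x i • b i) := by rw [hx]
      _ ≤ ∑ i, N (x i • b i) := seminorm_sum_le N _ _
      _ = ∑ i, |x i| * N (b i) := by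
          refine Finset.sum_congr rfl fun i _ => ?_
          rw [map_smul_eq_mul, Real.norm_eq_abs]
      _ ≤ ∑ i, ‖x‖ * N (b i) := by
          refine Finset.sum_le_sum fun i _ => ?_
          exact mul_le_mul_of_nonneg_right (hcoord x i) (apply_nonneg N _)
      _ = c * ‖x‖ := by rw [← Finset.mul_sum, mul_comm]
  have hlip : LipschitzWith c.toNNReal N := by
    refine LipschitzWith.of_dist_le_mul fun x y => ?_
    have h1 : |N x - N y| ≤ N (x - y) := by
      have := N.norm_sub_map_le_sub x y
      rwa [Real.norm_eq_abs] at this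
    have h2 : N (x - y) ≤ c * ‖x - y‖ := hbound (x - y)
    rw [Real.dist_eq, dist_eq_norm]
    calc |N x - N y| ≤ c * ‖x - y‖ := le_trans h1 h2
      _ ≤ (c.toNNReal : ℝ) * ‖x - y‖ := by
          apply mul_le_mul_of_nonneg_right _ (norm_nonneg _)
          rw [Real.coe_toNNReal c hc0]
  exact hlip.continuous

lemma borell_tail {n : ℕ} {K : Set (EuclideanSpace ℝ (Fin n))}
    (hKm : MeasurableSet K) (hKc : Convex ℝ K) (hK1 : volume K = 1)
    (N : Seminorm ℝ (EuclideanSpace ℝ (Fin n))) (hNc : Continuous N)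
    {t₀ : ℝ} (hθ : (2:ℝ)/3 ≤ (volume (K ∩ {x | N x ≤ t₀})).toReal)
    {s : ℝ} (hs : 1 < s) :
    (volume (K ∩ {x | s * t₀ < N x})).toReal ≤ (1/2 : ℝ) ^ ((s + 1)/2) := by
  have hs0 : 0 < s + 1 := by linarith
  set l : ℝ := 2 / (s + 1) with hl_def
  have hl0 : 0 < l := by positivity
  have hl1 : l < 1 := by
    rw [hl_def, div_lt_one hs0]; linarith
  set Bs := K ∩ {x | s * t₀ < N x} with hBs_def
  set A := K ∩ {x | N x ≤ t₀} with hA_def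
  set U := K ∩ {x | t₀ < N x} with hU_def
  have hBsm : MeasurableSet Bs :=
    hKm.inter (measurableSet_lt measurable_const hNc.measurable)
  have hAm : MeasurableSet A :=
    hKm.inter (measurableSet_le hNc.measurable measurable_const)
  have hUm : MeasurableSet U :=
    hKm.inter (measurableSet_lt measurable_const hNc.measurable)
  -- the convexity inclusion
  have hincl : ∀ x ∈ Bs, ∀ y ∈ A, l • x + (1 - l) • y ∈ U := by
    rintro x ⟨hxK, hxN⟩ y ⟨hyK, hyN⟩
    refine ⟨hKc hxK hyK hl0.le (by linarith) (by ring), ?_⟩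
    simp only [Set.mem_setOf_eq] at hxN hyN ⊢
    -- reverse triangle inequality
    have rev : N (l • x) - N ((1 - l) • y) ≤ N (l • x + (1 - l) • y) := by
      have h1 : N (l • x) ≤ N (l • x + (1 - l) • y) + N ((1 - l) • y) := by
        calc N (l • x) = N ((l • x + (1 - l) • y) + (-((1 - l) • y))) := by
              congr 1; abel
          _ ≤ N (l • x + (1 - l) • y) + N (-((1 - l) • y)) := map_add_le_add N _ _
          _ = N (l • x + (1 - l) • y) + N ((1 - l) • y) := by rw [map_neg_eq_map]
      linarith
    have e1 : N (l • x) = l * N x := by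
      rw [map_smul_eq_mul, Real.norm_eq_abs, abs_of_pos hl0]
    have e2 : N ((1 - l) • y) = (1 - l) * N y := by
      rw [map_smul_eq_mul, Real.norm_eq_abs, abs_of_pos (by linarith)]
    have harith : l * (s * t₀) - (1 - l) * t₀ = t₀ := by
      rw [hl_def]; field_simp; ring
    have hNy : (1 - l) * N y ≤ (1 - l) * t₀ :=
      mul_le_mul_of_nonneg_left hyN (by linarith)
    have hNx : l * (s * t₀) < l * N x := by
      exact mul_lt_mul_of_pos_left hxN hl0
    nlinarith [rev, e1, e2]
  -- apply Prékopa–Leindler to the indicators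
  set f : EuclideanSpace ℝ (Fin n) → ℝ≥0∞ := Bs.indicator 1 with hf_def
  set g : EuclideanSpace ℝ (Fin n) → ℝ≥0∞ := A.indicator 1 with hg_def
  set h : EuclideanSpace ℝ (Fin n) → ℝ≥0∞ := U.indicator 1 with hh_def
  have hf : Measurable f := measurable_one.indicator hBsm
  have hg : Measurable g := measurable_one.indicator hAm
  have hh : Measurable h := measurable_one.indicator hUm
  have hyp : ∀ x y, f x ^ l * g y ^ (1 - l) ≤ h (l • x + (1 - l) • y) := by
    intro x y
    by_cases hx : x ∈ Bs
    · by_cases hy : y ∈ A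
      · rw [hf_def, hg_def, hh_def, Set.indicator_of_mem hx, Set.indicator_of_mem hy,
          Set.indicator_of_mem (hincl x hx y hy)]
        simp [ENNReal.one_rpow]
      · rw [hg_def, Set.indicator_of_notMem hy]
        rw [ENNReal.zero_rpow_of_pos (by linarith), mul_zero]
        exact zero_le
    · rw [hf_def, Set.indicator_of_notMem hx]
      rw [ENNReal.zero_rpow_of_pos hl0, zero_mul]
      exact zero_le
  have PL := PL_euclidean n hf hg hh hl0 hl1 hyp
  rw [hf_def, hg_def, hh_def, lintegral_indicator_one hBsm, lintegral_indicator_one hAm,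
    lintegral_indicator_one hUm] at PL
  -- convert to real numbers
  have hBsle : volume Bs ≤ 1 := hK1 ▸ measure_mono Set.inter_subset_left
  have hAle : volume A ≤ 1 := hK1 ▸ measure_mono Set.inter_subset_left
  have hUle : volume U ≤ 1 := hK1 ▸ measure_mono Set.inter_subset_left
  have hBsne : volume Bs ≠ ∞ := (hBsle.trans_lt ENNReal.one_lt_top).ne
  have hAne : volume A ≠ ∞ := (hAle.trans_lt ENNReal.one_lt_top).ne
  have hUne : volume U ≠ ∞ := (hUle.trans_lt ENNReal.one_lt_top).ne
  set a : ℝ := (volume Bs).toReal with ha_def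
  set θ : ℝ := (volume A).toReal with hθ_def
  set u : ℝ := (volume U).toReal with hu_def
  have ha0 : 0 ≤ a := ENNReal.toReal_nonneg
  have hθ23 : (2:ℝ)/3 ≤ θ := hθ
  have hu13 : u ≤ 1 - θ := by
    -- A and U partition K
    have hpart : volume A + volume U = 1 := by
      have h1 : K \ {x | N x ≤ t₀} = U := by
        rw [hU_def]
        ext z
        simp only [Set.mem_diff, Set.mem_inter_iff, Set.mem_setOf_eq, not_le]
      rw [hA_def, ← h1, measure_inter_add_diff K (measurableSet_le hNc.measurable
        measurable_const), hK1]
    have h2 : θ + u = 1 := by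
      have := congrArg ENNReal.toReal hpart
      rwa [ENNReal.toReal_add hAne hUne, ENNReal.toReal_one] at this
    linarith
  -- real form of the PL inequality
  have hreal : a ^ l * θ ^ (1 - l) ≤ u := by
    have h1 : ((volume Bs) ^ l * (volume A) ^ (1 - l)).toReal ≤ u := by
      rw [hu_def]
      exact ENNReal.toReal_mono hUne PL
    rwa [ENNReal.toReal_mul, ← ENNReal.toReal_rpow, ← ENNReal.toReal_rpow] at h1
  -- conclude
  have hθpos : 0 < θ := by linarith
  have hθ1 : θ ≤ 1 := by nlinarith [ENNReal.toReal_nonneg (a := volume U)]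
  have hθpow : (2:ℝ)/3 ≤ θ ^ (1 - l) := by
    calc (2:ℝ)/3 ≤ θ := hθ23
      _ = θ ^ (1:ℝ) := (Real.rpow_one θ).symm
      _ ≤ θ ^ (1 - l) := Real.rpow_le_rpow_of_exponent_ge hθpos hθ1 (by linarith)
  have half : a ^ l ≤ 1/2 := by
    have h1 : a ^ l * ((2:ℝ)/3) ≤ a ^ l * θ ^ (1 - l) :=
      mul_le_mul_of_nonneg_left hθpow (Real.rpow_nonneg ha0 l)
    nlinarith [Real.rpow_nonneg ha0 l]
  have key : (a ^ l) ^ (1/l) = a := by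
    rw [← Real.rpow_mul ha0, mul_one_div_cancel hl0.ne', Real.rpow_one]
  rw [← key]
  calc (a ^ l) ^ (1/l) ≤ (1/2 : ℝ) ^ (1/l) :=
        Real.rpow_le_rpow (Real.rpow_nonneg ha0 l) half (by positivity)
    _ = (1/2 : ℝ) ^ ((s + 1)/2) := by
        rw [hl_def, one_div_div]
set_option maxHeartbeats 2000000 in
open Real in
/-- Kahane–Khinchine-type inequality: for a convex body `K` of volume 1, a seminorm
`|·|` and `p ≥ 1`, we have `(∫_K |x|^p dx)^{1/p} ≤ C·p·∫_K |x| dx` for an absolute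
constant `C ≥ 1`. -/
theorem kahane_khinchine_seminorm :
    ∃ C : ℝ, 1 ≤ C ∧ ∀ (n : ℕ) (K : Set (EuclideanSpace ℝ (Fin n))),
      IsCompact K → Convex ℝ K → volume K = 1 →
      ∀ N : Seminorm ℝ (EuclideanSpace ℝ (Fin n)), ∀ p : ℝ, 1 ≤ p →
        (∫ x in K, N x ^ p) ^ (1 / p) ≤ C * p * ∫ x in K, N x := by
  refine ⟨36, by norm_num, ?_⟩
  intro n K hK hKc hK1 N p hp
  have hNc : Continuous N := seminorm_continuous N
  have hKm : MeasurableSet K := hK.isClosed.measurableSet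
  set μ := volume.restrict K with hμ
  have hppos : 0 < p := lt_of_lt_of_le one_pos hp
  have hint : IntegrableOn (fun x => (N x : ℝ)) K volume :=
    hNc.continuousOn.integrableOn_compact hK
  have hcontp : Continuous fun x => (N x : ℝ) ^ p :=
    hNc.rpow_const fun x => Or.inr hppos.le
  have hintp : IntegrableOn (fun x => (N x : ℝ) ^ p) K volume :=
    hcontp.continuousOn.integrableOn_compact hK
  set a := ∫ x in K, (N x : ℝ) with ha_def
  have ha0 : 0 ≤ a := setIntegral_nonneg hKm fun x _ => apply_nonneg N x
  have hNP0 : 0 ≤ ∫ x in K, (N x : ℝ) ^ p :=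
    setIntegral_nonneg hKm fun x _ => Real.rpow_nonneg (apply_nonneg N x) p
  rcases eq_or_lt_of_le ha0 with ha0' | hapos
  · -- the degenerate case `∫ N = 0`
    have hae : (fun x => (N x : ℝ)) =ᵐ[μ] 0 :=
      (integral_eq_zero_iff_of_nonneg (fun x => apply_nonneg N x) hint).1 ha0'.symm
    have haep : (fun x => (N x : ℝ) ^ p) =ᵐ[μ] 0 := by
      filter_upwards [hae] with x hx
      simp only [Pi.zero_apply] at hx ⊢
      rw [hx, Real.zero_rpow hppos.ne']
    have h2 : ∫ x in K, (N x : ℝ) ^ p = 0 := by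
      rw [integral_congr_ae haep]
      simp
    rw [h2, Real.zero_rpow (by positivity : (1:ℝ)/p ≠ 0), ← ha0']
    norm_num
  · -- the main case `∫ N > 0`
    have hL23 : (2:ℝ)/3 ≤ Real.log 2 := by nlinarith [Real.log_two_gt_d9]
    have hLpos : 0 < Real.log 2 := by linarith
    set t₀ := 3 * a with ht₀_def
    have ht₀pos : 0 < t₀ := by positivity
    have hNaem : AEMeasurable (fun x => ENNReal.ofReal (N x : ℝ)) μ :=
      (ENNReal.measurable_ofReal.comp hNc.measurable).aemeasurable
    have hlina : ∫⁻ x, ENNReal.ofReal (N x : ℝ) ∂μ = ENNReal.ofReal a :=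
      (ofReal_integral_eq_lintegral_ofReal hint
        (Filter.Eventually.of_forall fun x => apply_nonneg N x)).symm
    -- Markov's inequality gives mass ≥ 2/3 below 3a
    have hmarkov : μ {x | t₀ < N x} ≤ ENNReal.ofReal (1/3) := by
      have h1 : μ {x | t₀ < N x} ≤ μ {x | ENNReal.ofReal t₀ ≤ ENNReal.ofReal (N x : ℝ)} :=
        measure_mono fun x hx => ENNReal.ofReal_le_ofReal (le_of_lt hx)
      have h2 := meas_ge_le_lintegral_div hNaem (ε := ENNReal.ofReal t₀)
        (by simp [ENNReal.ofReal_eq_zero]; linarith) ENNReal.ofReal_ne_top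
      have h3 : (∫⁻ x, ENNReal.ofReal (N x : ℝ) ∂μ) / ENNReal.ofReal t₀ =
          ENNReal.ofReal (1/3) := by
        rw [hlina, ← ENNReal.ofReal_div_of_pos ht₀pos]
        congr 1
        rw [ht₀_def]
        field_simp
      exact h1.trans (h2.trans h3.le)
    have hμapply : ∀ (c : ℝ), μ {x | c < N x} = volume (K ∩ {x | c < N x}) := by
      intro c
      rw [hμ, Measure.restrict_apply (measurableSet_lt measurable_const hNc.measurable),
        Set.inter_comm]
    have htail0 : (volume (K ∩ {x | t₀ < N x})).toReal ≤ 1/3 := by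
      refine ENNReal.toReal_le_of_le_ofReal (by norm_num) ?_
      rw [← hμapply]
      exact hmarkov
    have hfin : ∀ (S : Set (EuclideanSpace ℝ (Fin n))), volume (K ∩ S) ≠ ∞ := by
      intro S
      have : volume (K ∩ S) ≤ 1 := hK1 ▸ measure_mono Set.inter_subset_left
      exact (this.trans_lt ENNReal.one_lt_top).ne
    have hθ : (2:ℝ)/3 ≤ (volume (K ∩ {x | N x ≤ t₀})).toReal := by
      have hpart : volume (K ∩ {x | N x ≤ t₀}) + volume (K ∩ {x | t₀ < N x}) = 1 := by
        have h1 : K \ {x | N x ≤ t₀} = K ∩ {x | t₀ < N x} := by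
          ext z
          simp only [Set.mem_diff, Set.mem_inter_iff, Set.mem_setOf_eq, not_le]
        rw [← h1, measure_inter_add_diff K (measurableSet_le hNc.measurable measurable_const),
          hK1]
      have h2 := congrArg ENNReal.toReal hpart
      rw [ENNReal.toReal_add (hfin _) (hfin _), ENNReal.toReal_one] at h2
      linarith
    -- the exponential tail bound
    set β := Real.log 2 / (6 * a) with hβ_def
    have hβpos : 0 < β := div_pos hLpos (by positivity)
    have hhalfexp : ∀ y : ℝ, (1/2 : ℝ) ^ y = Real.exp (-(Real.log 2) * y) := by
      intro y
      rw [Real.rpow_def_of_pos (by norm_num : (0:ℝ) < 1/2), one_div, Real.log_inv]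
    have htail : ∀ u : ℝ, 0 < u →
        (volume (K ∩ {x | u < N x})).toReal ≤ 2 * Real.exp (-β * u) := by
      intro u hu
      by_cases hcase : u ≤ 3 * a
      · have h1 : (volume (K ∩ {x | u < N x})).toReal ≤ 1 := by
          refine ENNReal.toReal_le_of_le_ofReal one_pos.le ?_
          rw [ENNReal.ofReal_one, ← hK1]
          exact measure_mono Set.inter_subset_left
        have hβu : β * u ≤ Real.log 2 / 2 := by
          have e0 : β * u = Real.log 2 * u / (6*a) := by rw [hβ_def]; ring
          rw [e0, div_le_div_iff₀ (by positivity) two_pos]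
          nlinarith
        have h2 : Real.exp (-(Real.log 2) / 2) ≤ Real.exp (-β * u) := by
          apply Real.exp_le_exp.2
          linarith
        have h3 : (1/2 : ℝ) ≤ Real.exp (-(Real.log 2) / 2) := by
          have e1 : Real.exp (-(Real.log 2) / 2) = (1/2 : ℝ) ^ ((1:ℝ)/2) := by
            rw [hhalfexp]
            congr 1
            ring
          rw [e1]
          calc (1/2 : ℝ) = (1/2 : ℝ) ^ (1:ℝ) := (Real.rpow_one _).symm
            _ ≤ (1/2 : ℝ) ^ ((1:ℝ)/2) :=
              Real.rpow_le_rpow_of_exponent_ge (by norm_num) (by norm_num) (by norm_num)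
        nlinarith
      · push_neg at hcase
        set s := u / (3 * a) with hs_def
        have hs1 : 1 < s := by
          rw [hs_def, lt_div_iff₀ (by positivity)]
          linarith
        have hst : s * t₀ = u := by
          rw [hs_def, ht₀_def]
          field_simp
        have hb := borell_tail hKm hKc hK1 N hNc hθ hs1
        rw [hst] at hb
        refine hb.trans ?_
        have h4 : (1/2 : ℝ) ^ ((s+1)/2) ≤ (1/2 : ℝ) ^ (u / (6 * a)) := by
          apply Real.rpow_le_rpow_of_exponent_ge (by norm_num) (by norm_num)
          have e0 : s = 2 * (u/(6*a)) := by rw [hs_def]; field_simp; ring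
          rw [e0]
          linarith
        refine h4.trans ?_
        rw [hhalfexp]
        have : -Real.log 2 * (u / (6 * a)) = -β * u := by
          rw [hβ_def]; field_simp
        rw [this]
        nlinarith [Real.exp_pos (-β * u)]
    -- layer-cake for the p-th moment
    have hg_intble : ∀ t > (0:ℝ), IntervalIntegrable (fun t => p * t ^ (p - 1)) volume 0 t :=
      fun t _ => (intervalIntegral.intervalIntegrable_rpow' (by linarith)).const_mul p
    have hg_nn : ∀ᵐ t ∂(volume.restrict (Set.Ioi (0:ℝ))), 0 ≤ p * t ^ (p - 1) := by
      refine (ae_restrict_iff' measurableSet_Ioi).2 (Filter.Eventually.of_forall fun t ht => ?_)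
      have : (0:ℝ) < t := ht
      positivity
    have layer := lintegral_comp_eq_lintegral_meas_lt_mul μ (f := fun x => (N x : ℝ))
      (Filter.Eventually.of_forall fun x => apply_nonneg N x) hNc.measurable.aemeasurable
      hg_intble hg_nn
    have hinner : ∀ ω : EuclideanSpace ℝ (Fin n),
        ∫ t in (0:ℝ)..(N ω : ℝ), p * t ^ (p - 1) = (N ω : ℝ) ^ p := by
      intro ω
      rw [intervalIntegral.integral_const_mul, integral_rpow (Or.inl (by linarith))]
      rw [sub_add_cancel, Real.zero_rpow hppos.ne', sub_zero, mul_div_cancel₀ _ hppos.ne']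
    have key1 : ∫⁻ x, ENNReal.ofReal ((N x : ℝ) ^ p) ∂μ =
        ∫⁻ t in Set.Ioi (0:ℝ), μ {x | t < N x} * ENNReal.ofReal (p * t ^ (p - 1)) := by
      rw [← layer]
      exact lintegral_congr fun ω => by rw [hinner]
    -- bound the tail integral
    set D := 2 * p * (2 * p / β) ^ (p - 1) with hD_def
    have hD0 : 0 ≤ D := by positivity
    have hpoint : ∀ t ∈ Set.Ioi (0:ℝ),
        μ {x | t < N x} * ENNReal.ofReal (p * t ^ (p - 1)) ≤
          ENNReal.ofReal (D * Real.exp (-(β/2) * t)) := by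
      intro t ht
      have ht' : (0:ℝ) < t := ht
      have hb1 : μ {x | t < N x} ≤ ENNReal.ofReal (2 * Real.exp (-β * t)) := by
        rw [hμapply]
        have hne := hfin {x | t < N x}
        rw [← ENNReal.ofReal_toReal hne]
        exact ENNReal.ofReal_le_ofReal (htail t ht')
      calc μ {x | t < N x} * ENNReal.ofReal (p * t ^ (p - 1))
          ≤ ENNReal.ofReal (2 * Real.exp (-β * t)) * ENNReal.ofReal (p * t ^ (p - 1)) :=
            mul_le_mul_left hb1 _
        _ = ENNReal.ofReal (2 * Real.exp (-β * t) * (p * t ^ (p - 1))) :=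
            (ENNReal.ofReal_mul (by positivity)).symm
        _ ≤ ENNReal.ofReal (D * Real.exp (-(β/2) * t)) := by
            apply ENNReal.ofReal_le_ofReal
            -- pointwise exponential domination
            have hstep : t ≤ 2 * p / β * Real.exp (β * t / (2 * p)) := by
              have h5 : β * t / (2 * p) ≤ Real.exp (β * t / (2 * p)) := by
                have := Real.add_one_le_exp (β * t / (2 * p))
                linarith
              have h6 : t = 2 * p / β * (β * t / (2 * p)) := by field_simp
              calc t = 2 * p / β * (β * t / (2 * p)) := h6
                _ ≤ 2 * p / β * Real.exp (β * t / (2 * p)) :=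
                    mul_le_mul_of_nonneg_left h5 (by positivity)
            have hrp : t ^ (p - 1) ≤ (2 * p / β) ^ (p - 1) *
                Real.exp (β * t / (2 * p) * (p - 1)) := by
              calc t ^ (p - 1) ≤ (2 * p / β * Real.exp (β * t / (2 * p))) ^ (p - 1) :=
                    Real.rpow_le_rpow ht'.le hstep (by linarith)
                _ = (2 * p / β) ^ (p - 1) * Real.exp (β * t / (2 * p) * (p - 1)) := by
                    rw [Real.mul_rpow (by positivity) (Real.exp_pos _).le, ← Real.exp_mul]
            have hexp2 : Real.exp (β * t / (2 * p) * (p - 1)) ≤ Real.exp (β * t / 2) := by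
              apply Real.exp_le_exp.2
              rw [div_mul_eq_mul_div, div_le_div_iff₀ (by positivity) two_pos]
              nlinarith [mul_pos hβpos ht']
            have hfinal : t ^ (p - 1) ≤ (2 * p / β) ^ (p - 1) * Real.exp (β * t / 2) :=
              hrp.trans (mul_le_mul_of_nonneg_left hexp2 (by positivity))
            have hcomb : Real.exp (β * t / 2) * Real.exp (-β * t) = Real.exp (-(β/2) * t) := by
              rw [← Real.exp_add]
              congr 1
              ring
            calc 2 * Real.exp (-β * t) * (p * t ^ (p - 1))
                ≤ 2 * Real.exp (-β * t) * (p * ((2 * p / β) ^ (p - 1) *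
                    Real.exp (β * t / 2))) := by
                  apply mul_le_mul_of_nonneg_left _ (by positivity)
                  exact mul_le_mul_of_nonneg_left hfinal (by positivity)
              _ = D * (Real.exp (β * t / 2) * Real.exp (-β * t)) := by rw [hD_def]; ring
              _ = D * Real.exp (-(β/2) * t) := by rw [hcomb]
    have hmeas_rhs : Measurable fun t : ℝ => ENNReal.ofReal (D * Real.exp (-(β/2) * t)) :=
      (by fun_prop : Measurable fun t : ℝ => D * Real.exp (-(β/2) * t)).ennreal_ofReal
    have key2 : ∫⁻ t in Set.Ioi (0:ℝ), μ {x | t < N x} * ENNReal.ofReal (p * t ^ (p - 1)) ≤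
        ENNReal.ofReal (D * (2 / β)) := by
      have hb2 : ∫⁻ t in Set.Ioi (0:ℝ), μ {x | t < N x} * ENNReal.ofReal (p * t ^ (p - 1)) ≤
          ∫⁻ t in Set.Ioi (0:ℝ), ENNReal.ofReal (D * Real.exp (-(β/2) * t)) := by
        refine setLIntegral_mono hmeas_rhs hpoint
      refine hb2.trans ?_
      have hintexp : IntegrableOn (fun t : ℝ => Real.exp (-(β/2) * t)) (Set.Ioi 0) volume :=
        exp_neg_integrableOn_Ioi 0 (by positivity)
      have hintD : IntegrableOn (fun t : ℝ => D * Real.exp (-(β/2) * t)) (Set.Ioi 0) volume :=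
        hintexp.const_mul D
      rw [← ofReal_integral_eq_lintegral_ofReal hintD
        (Filter.Eventually.of_forall fun t => by positivity)]
      apply ENNReal.ofReal_le_ofReal
      rw [integral_const_mul]
      have hval : ∫ t in Set.Ioi (0:ℝ), Real.exp (-(β/2) * t) = 2 / β := by
        have hcomp := integral_comp_mul_left_Ioi (fun x => Real.exp (-x)) 0
          (b := β/2) (by positivity)
        simp only [mul_zero, integral_exp_neg_Ioi, neg_zero, Real.exp_zero,
          smul_eq_mul, mul_one] at hcomp
        have heq : (fun t : ℝ => Real.exp (-(β/2) * t)) =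
            fun t : ℝ => Real.exp (-(β/2 * t)) := by
          funext t; rw [neg_mul]
        rw [heq, hcomp, inv_div]
      rw [hval]
    -- assemble the moment bound
    have key3 : ∫ x in K, (N x : ℝ) ^ p =
        (∫⁻ x, ENNReal.ofReal ((N x : ℝ) ^ p) ∂μ).toReal :=
      integral_eq_lintegral_of_nonneg_ae
        (Filter.Eventually.of_forall fun x => Real.rpow_nonneg (apply_nonneg N x) p)
        hcontp.aestronglyMeasurable
    have hDβ0 : 0 ≤ D * (2/β) := by
      have : (0:ℝ) ≤ 2/β := by positivity
      exact mul_nonneg hD0 this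
    have hfinal1 : ∫ x in K, (N x : ℝ) ^ p ≤ D * (2/β) := by
      rw [key3]
      refine ENNReal.toReal_le_of_le_ofReal hDβ0 ?_
      rw [key1]
      exact key2
    -- algebra : D * (2/β) ≤ (36 p a)^p
    have h36 : (0:ℝ) < 36 * p * a := by positivity
    have hβinv : 2 * p / β ≤ 36 * p * a := by
      have e0 : 2 * p / β = 12 * p * a / Real.log 2 := by
        rw [hβ_def]; field_simp; ring
      rw [e0, div_le_iff₀ hLpos]
      nlinarith
    have h2β : 2 * p * (2/β) ≤ 36 * p * a := by
      have e0 : 2 * p * (2/β) = 24 * p * a / Real.log 2 := by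
        rw [hβ_def]; field_simp; ring
      rw [e0, div_le_iff₀ hLpos]
      nlinarith
    have hfinal2 : D * (2/β) ≤ (36 * p * a) ^ p := by
      have e1 : D * (2/β) = (2*p/β) ^ (p-1) * (2*p*(2/β)) := by rw [hD_def]; ring
      have e2 : (2*p/β) ^ (p-1) ≤ (36*p*a) ^ (p-1) :=
        Real.rpow_le_rpow (by positivity) hβinv (by linarith)
      have e3 : (36*p*a) ^ p = (36*p*a) ^ (p-1) * (36*p*a) := by
        rw [← Real.rpow_add_one h36.ne' (p-1), sub_add_cancel]
      rw [e1, e3]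
      refine mul_le_mul e2 h2β ?_ (Real.rpow_nonneg h36.le _)
      have : (0:ℝ) ≤ 2/β := by positivity
      positivity
    calc (∫ x in K, (N x : ℝ) ^ p) ^ (1/p)
        ≤ ((36 * p * a) ^ p) ^ (1/p) :=
          Real.rpow_le_rpow hNP0 (hfinal1.trans hfinal2) (by positivity)
      _ = 36 * p * a := by
          rw [← Real.rpow_mul h36.le, mul_one_div_cancel hppos.ne', Real.rpow_one]
end
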